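/- arXiv:1409.8163 — 5 statements merged into one kernel-verified Lean document; each statement's English description precedes it below -/
import Mathlib

section
/- In the Clifford algebra Cl(p,q) over ℝ of odd dimension n = p+q, for any two elements U, V, the coefficient of the top basis element e^{1...n} in UV equals that in VU, i.e. π(UV) = π(VU). -/
/-- Ordered product `e^{a_1} ⋯ e^{a_k}` (`a_1 < ⋯ < a_k`) of generators over an
ordered multi-index, encoded as a finset of indices. For `s = ∅` this is `1 = e`. -/
def cliffProd {n : ℕ} {A : Type*} [Ring A] (e : Fin n → A) (s : Finset (Fin n)) : A :=
  ((s.sort (· ≤ ·)).map e).prod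

/-- The entries of the diagonal matrix `η = diag(1,…,1,−1,…,−1)` with `p` entries `+1`
followed by `q = n - p` entries `−1`. -/
def eta (p : ℕ) {n : ℕ} (a b : Fin n) : ℤ :=
  if a = b then (if (a : ℕ) < p then 1 else -1) else 0

section Aux

variable {n : ℕ} {A : Type*} [Ring A] (e : Fin n → A)

lemma cliffProd_empty : cliffProd e ∅ = 1 := by simp [cliffProd]

lemma cliffProd_insert {a : Fin n} {s : Finset (Fin n)} (h₁ : ∀ b ∈ s, a ≤ b)
    (h₂ : a ∉ s) : cliffProd e (insert a s) = e a * cliffProd e s := by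
  unfold cliffProd
  rw [Finset.sort_insert _ h₁ h₂, List.map_cons, List.prod_cons]

lemma cliffProd_min {s : Finset (Fin n)} (hs : s.Nonempty) :
    cliffProd e s = e (s.min' hs) * cliffProd e (s.erase (s.min' hs)) := by
  rw [← cliffProd_insert e (fun b hb => s.min'_le b (Finset.mem_of_mem_erase hb))
    (Finset.notMem_erase _ _), Finset.insert_erase (s.min'_mem hs)]

variable (hanti : ∀ a b : Fin n, a ≠ b → e a * e b = -(e b * e a))

include hanti in
lemma move (a : Fin n) : ∀ (l : List (Fin n)), a ∉ l →
    e a * (l.map e).prod = ((-1 : ℤ) ^ l.length) • ((l.map e).prod * e a)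
  | [], _ => by simp
  | b :: l, h => by
    have hab : a ≠ b := fun hx => h (hx ▸ List.mem_cons_self)
    have hal : a ∉ l := fun hx => h (List.mem_cons_of_mem _ hx)
    rw [List.map_cons, List.prod_cons, ← mul_assoc, hanti a b hab, neg_mul, mul_assoc,
      move a l hal, mul_smul_comm, ← mul_assoc, List.length_cons, pow_succ, ← neg_smul]
    ring_nf

include hanti in
lemma swap : ∀ (l m : List (Fin n)), (∀ x ∈ l, x ∉ m) →
    (l.map e).prod * (m.map e).prod
      = ((-1 : ℤ) ^ (l.length * m.length)) • ((m.map e).prod * (l.map e).prod)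
  | [], m, _ => by simp
  | a :: l, m, h => by
    have ham : a ∉ m := h a List.mem_cons_self
    have hlm : ∀ x ∈ l, x ∉ m := fun x hx => h x (List.mem_cons_of_mem _ hx)
    rw [List.map_cons, List.prod_cons, mul_assoc, swap l m hlm, mul_smul_comm,
      ← mul_assoc, move e hanti a m ham, smul_mul_assoc, smul_smul, mul_assoc,
      ← pow_add, List.length_cons]
    ring_nf

variable (hsq : ∀ a : Fin n, ∃ c : ℤ, e a * e a = (c : A))

include hanti hsq in
lemma mul_single : ∀ (t : Finset (Fin n)) (a : Fin n),
    ∃ c : ℤ, e a * cliffProd e t = c • cliffProd e (symmDiff {a} t) := by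
  intro t
  induction t using Finset.strongInductionOn with
  | _ t ih =>
  intro a
  rcases t.eq_empty_or_nonempty with rfl | hne
  · refine ⟨1, ?_⟩
    have : symmDiff ({a} : Finset (Fin n)) ∅ = {a} := by simp
    simp [this, cliffProd, Finset.sort_singleton, cliffProd_empty]
  · set b := t.min' hne with hb
    rcases lt_trichotomy a b with hab | hab | hab
    · -- a < min t : a ∉ t
      have hat : a ∉ t := fun hx => absurd (t.min'_le a hx) (not_le.mpr hab)
      have hsd : symmDiff ({a} : Finset (Fin n)) t = insert a t := by
        ext x
        by_cases hx : x = a <;> simp [Finset.mem_symmDiff, hx, hat] <;> tauto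
      refine ⟨1, ?_⟩
      rw [hsd, cliffProd_insert e (fun c hc => le_of_lt (lt_of_lt_of_le hab (t.min'_le c hc)))
        hat, one_smul]
    · -- a = min t
      have hat : a ∈ t := by rw [hab, hb]; exact t.min'_mem hne
      obtain ⟨c, hc⟩ := hsq a
      refine ⟨c, ?_⟩
      have hsd : symmDiff ({a} : Finset (Fin n)) t = t.erase a := by
        ext x
        by_cases hx : x = a <;> simp [Finset.mem_symmDiff, Finset.mem_erase, hx, hat] <;> tauto
      rw [hsd, cliffProd_min e hne, ← hb, ← hab, ← mul_assoc, hc, ← zsmul_eq_mul]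
    · -- min t < a
      have hbt : b ∈ t := t.min'_mem hne
      have hba : b ≠ a := ne_of_lt hab
      obtain ⟨c, hc⟩ := ih (t.erase b) (Finset.erase_ssubset hbt) a
      set u := symmDiff ({a} : Finset (Fin n)) (t.erase b) with hu
      have hbu : b ∉ u := by
        simp [hu, Finset.mem_symmDiff, hba, Finset.mem_erase]
      have hle : ∀ x ∈ u, b ≤ x := by
        intro x hx
        rw [hu, Finset.mem_symmDiff] at hx
        rcases hx with ⟨hx, -⟩ | ⟨hx, -⟩
        · simp only [Finset.mem_singleton] at hx
          exact hx ▸ le_of_lt hab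
        · exact t.min'_le x (Finset.mem_of_mem_erase hx)
      have hins : insert b u = symmDiff ({a} : Finset (Fin n)) t := by
        ext x
        by_cases hx : x = b <;>
          simp [hu, Finset.mem_symmDiff, Finset.mem_erase, hx, hbt, hba.symm] <;> tauto
      refine ⟨-c, ?_⟩
      rw [cliffProd_min e hne, ← hb, ← mul_assoc, hanti a b (ne_of_gt hab), neg_mul,
        mul_assoc, hc, mul_smul_comm, ← cliffProd_insert e hle hbu, hins, ← neg_smul]

include hanti hsq in
lemma mul_cliff : ∀ (s t : Finset (Fin n)),
    ∃ c : ℤ, cliffProd e s * cliffProd e t = c • cliffProd e (symmDiff s t) := by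
  intro s
  induction s using Finset.strongInductionOn with
  | _ s ih =>
  intro t
  rcases s.eq_empty_or_nonempty with rfl | hne
  · refine ⟨1, ?_⟩
    have : symmDiff (∅ : Finset (Fin n)) t = t := by
      ext x; simp [Finset.mem_symmDiff]
    rw [this, cliffProd_empty, one_mul, one_smul]
  · set m := s.min' hne with hm
    have hms : m ∈ s := s.min'_mem hne
    obtain ⟨c₁, hc₁⟩ := ih (s.erase m) (Finset.erase_ssubset hms) t
    obtain ⟨c₂, hc₂⟩ := mul_single e hanti hsq (symmDiff (s.erase m) t) m
    have hsd : symmDiff ({m} : Finset (Fin n)) (symmDiff (s.erase m) t) = symmDiff s t := by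
      rw [← symmDiff_assoc]
      congr 1
      ext x
      by_cases hx : x = m <;> simp [Finset.mem_symmDiff, Finset.mem_erase, hx, hms] <;> tauto
    refine ⟨c₁ * c₂, ?_⟩
    rw [cliffProd_min e hne, ← hm, mul_assoc, hc₁, mul_smul_comm, hc₂, hsd, smul_smul]

end Aux

/-- In the real Clifford algebra `Cl(p,q)` of odd dimension `n = p + q`, for any two
elements `U, V`, the coefficient of the volume element `e^{1…n}` in `U*V` equals the one
in `V*U`: `π(UV) = π(VU)`. Here `bE` is the standard basis `{e^A}` and the coefficient of
`e^{1…n}` is the `repr` coordinate at the full multi-index `Finset.univ`. -/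
theorem stmt3 (p q n : ℕ) (hn : n = p + q) (hodd : Odd n)
    {A : Type*} [Ring A] [Algebra ℝ A]
    (e : Fin n → A)
    (hrele : ∀ a b : Fin n, e a * e b + e b * e a = ((2 * eta p a b : ℤ) : A))
    (bE : Module.Basis (Finset (Fin n)) ℝ A)
    (hbE : ∀ s, bE s = cliffProd e s)
    (U V : A) :
    bE.repr (U * V) Finset.univ = bE.repr (V * U) Finset.univ := by
  classical
  -- derived relations
  have hanti : ∀ a b : Fin n, a ≠ b → e a * e b = -(e b * e a) := by
    intro a b hab
    have h := hrele a b
    rw [eta, if_neg hab] at h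
    simp only [mul_zero, Int.cast_zero] at h
    exact eq_neg_of_add_eq_zero_left h
  have hsq : ∀ a : Fin n, ∃ c : ℤ, e a * e a = (c : A) := by
    intro a
    refine ⟨eta p a a, ?_⟩
    have h := hrele a a
    have h2 : (2:ℝ) • (e a * e a) = (2:ℝ) • ((eta p a a : ℤ) : A) := by
      rw [two_smul, two_smul, h]
      push_cast [two_mul]
      ring
    have := congrArg (fun z => (2:ℝ)⁻¹ • z) h2
    simpa [smul_smul] using this
  -- coefficient of a scaled basis vector
  have hrepr : ∀ (c : ℤ) (r : Finset (Fin n)),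
      bE.repr ((c : ℤ) • bE r) Finset.univ = if r = Finset.univ then (c : ℝ) else 0 := by
    intro c r
    rw [map_zsmul, Finsupp.smul_apply, bE.repr_self, Finsupp.single_apply]
    by_cases hr : r = Finset.univ <;> simp [hr]
  -- key identity on basis vectors
  have key : ∀ s t : Finset (Fin n),
      bE.repr (bE s * bE t) Finset.univ = bE.repr (bE t * bE s) Finset.univ := by
    intro s t
    by_cases huniv : symmDiff s t = Finset.univ
    · -- s, t disjoint and complementary: the products commute
      have hdisj : ∀ x ∈ s.sort (· ≤ ·), x ∉ t.sort (· ≤ ·) := by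
        intro x hx hxt
        rw [Finset.mem_sort] at hx hxt
        have : x ∉ symmDiff s t := by simp [Finset.mem_symmDiff, hx, hxt]
        exact this (huniv ▸ Finset.mem_univ x)
      have hcard : s.card + t.card = n := by
        have hd : Disjoint s t := by
          rw [Finset.disjoint_left]
          intro x hx hxt
          have : x ∉ symmDiff s t := by simp [Finset.mem_symmDiff, hx, hxt]
          exact this (huniv ▸ Finset.mem_univ x)
        have huni : s ∪ t = Finset.univ := by
          apply Finset.eq_univ_of_forall
          intro x
          have := huniv ▸ Finset.mem_univ x
          rw [Finset.mem_symmDiff] at this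
          rcases this with ⟨h1, -⟩ | ⟨h1, -⟩ <;> simp [Finset.mem_union, h1]
        rw [← Finset.card_union_of_disjoint hd, huni, Finset.card_univ, Fintype.card_fin]
      have heven : Even (s.card * t.card) := by
        rcases Nat.even_or_odd s.card with hs | hs
        · exact hs.mul_right _
        · have : Even t.card := by
            rcases Nat.even_or_odd t.card with ht | ht
            · exact ht
            · exfalso
              have : Even (s.card + t.card) := hs.add_odd ht
              rw [hcard] at this
              exact (Nat.not_even_iff_odd.mpr hodd) this
          exact this.mul_left _
      have hswap := swap e hanti (s.sort (· ≤ ·)) (t.sort (· ≤ ·)) hdisj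
      rw [Finset.length_sort, Finset.length_sort, heven.neg_one_pow, one_smul] at hswap
      have hswap' : cliffProd e s * cliffProd e t = cliffProd e t * cliffProd e s := hswap
      rw [hbE s, hbE t]
      show bE.repr (cliffProd e s * cliffProd e t) Finset.univ
        = bE.repr (cliffProd e t * cliffProd e s) Finset.univ
      rw [hswap']
    · obtain ⟨c, hc⟩ := mul_cliff e hanti hsq s t
      obtain ⟨c', hc'⟩ := mul_cliff e hanti hsq t s
      have huniv' : symmDiff t s ≠ Finset.univ := by rwa [symmDiff_comm]
      rw [hbE s, hbE t]
      show bE.repr (cliffProd e s * cliffProd e t) Finset.univ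
        = bE.repr (cliffProd e t * cliffProd e s) Finset.univ
      rw [hc, hc', ← hbE, ← hbE, hrepr, hrepr, if_neg huniv, if_neg huniv']
  -- bilinear extension
  let g : A →ₗ[ℝ] ℝ := (Finsupp.lapply Finset.univ).comp bE.repr.toLinearMap
  let B1 : A →ₗ[ℝ] A →ₗ[ℝ] ℝ := (LinearMap.mul ℝ A).compr₂ g
  let B2 : A →ₗ[ℝ] A →ₗ[ℝ] ℝ := (LinearMap.mul ℝ A).flip.compr₂ g
  have hB : B1 = B2 := by
    apply bE.ext
    intro s
    apply bE.ext
    intro t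
    simpa [B1, B2, g] using key s t
  have := DFunLike.congr_fun (DFunLike.congr_fun hB U) V
  simpa [B1, B2, g] using this
end

section
/- Let γ^1,...,γ^n ∈ Cl(p,q) satisfy γ^a γ^b + γ^b γ^a = 2η^{ab}e with n = p+q odd. Then π(γ^{a_1}···γ^{a_k}) = 0 for every ordered multi-index of length 1 ≤ k ≤ n−1, where π projects onto the coefficient of the volume element e^{1...n}. -/
section aux
variable {n : ℕ} {A : Type*} [Ring A]

/-- moving a generator past a list of distinct generators -/
lemma clMove (g : Fin n → A)
    (hg2 : ∀ a b : Fin n, a ≠ b → g a * g b = -(g b * g a)) (a : Fin n) :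
    ∀ l : List (Fin n), a ∉ l →
      g a * (l.map g).prod = ((-1 : ℤ) ^ l.length) • ((l.map g).prod * g a) := by
  intro l
  induction l with
  | nil => simp
  | cons b l ih =>
    intro hal
    have hab : a ≠ b := fun h => hal (h ▸ (List.mem_cons_self : b ∈ b :: l))
    have hal' : a ∉ l := fun h => hal (List.mem_cons_of_mem _ h)
    simp only [List.map_cons, List.prod_cons, List.length_cons]
    rw [← mul_assoc, hg2 a b hab, neg_mul, mul_assoc, ih hal', mul_smul_comm,
      pow_succ, ← neg_smul]
    ring_nf
    rw [mul_assoc]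


/-- splitting the sorted list of `insert a s` at `a` -/
lemma sortSplitIns (s : Finset (Fin n)) (a : Fin n) (ha : a ∉ s) :
    (insert a s).sort (· ≤ ·) =
      ((s.filter (· < a)).sort (· ≤ ·)) ++ a :: ((s.filter (a < ·)).sort (· ≤ ·)) := by
  have hsetS : (s.filter (· < a)) ∪ insert a (s.filter (a < ·)) = insert a s := by
    ext x
    simp only [Finset.mem_union, Finset.mem_insert, Finset.mem_filter]
    constructor
    · rintro ((⟨h, _⟩) | h | ⟨h, _⟩) <;> simp [h]
    · rintro (rfl | h)
      · tauto
      · rcases lt_trichotomy x a with h' | rfl | h' <;> tauto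
  refine (fun hp h1 h2 => List.Perm.eq_of_pairwise' (r := ((· ≤ ·) : Fin n → Fin n → Prop)) h1 h2 hp) ?_ ?_ ?_
  · apply List.perm_of_nodup_nodup_toFinset_eq (Finset.sort_nodup _ _)
    · refine List.Nodup.append (Finset.sort_nodup _ _)
        (List.nodup_cons.2 ⟨?_, Finset.sort_nodup _ _⟩) ?_
      · simp
      · intro x hx hx'
        simp only [Finset.mem_sort, Finset.mem_filter, List.mem_cons] at hx hx'
        rcases hx' with h | h
        · exact absurd (h ▸ hx.2) (lt_irrefl a)
        · exact absurd (hx.2.trans h.2) (lt_irrefl x)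
    · rw [List.toFinset_append, List.toFinset_cons]
      simp only [Finset.sort_toFinset]
      rw [hsetS]
  · exact Finset.pairwise_sort _ _
  · rw [List.pairwise_append]
    refine ⟨Finset.pairwise_sort _ _, ?_, ?_⟩
    · rw [List.pairwise_cons]
      refine ⟨?_, Finset.pairwise_sort _ _⟩
      intro b hb
      exact le_of_lt (Finset.mem_filter.1 (Finset.mem_sort _ |>.1 hb)).2
    · intro x hx y hy
      have hx' := Finset.mem_filter.1 (Finset.mem_sort _ |>.1 hx)
      rcases List.mem_cons.1 hy with rfl | hy'
      · exact le_of_lt hx'.2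
      · have hy'' := Finset.mem_filter.1 (Finset.mem_sort _ |>.1 hy')
        exact le_of_lt (hx'.2.trans hy''.2)

/-- splitting the sorted list of `s` at an absent element `a` -/
lemma sortSplitNot (s : Finset (Fin n)) (a : Fin n) (ha : a ∉ s) :
    s.sort (· ≤ ·) =
      ((s.filter (· < a)).sort (· ≤ ·)) ++ ((s.filter (a < ·)).sort (· ≤ ·)) := by
  have hsetS : (s.filter (· < a)) ∪ (s.filter (a < ·)) = s := by
    ext x
    simp only [Finset.mem_union, Finset.mem_filter]
    constructor
    · rintro (⟨h, _⟩ | ⟨h, _⟩) <;> assumption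
    · intro h
      rcases lt_trichotomy x a with h' | rfl | h' <;> tauto
  refine (fun hp h1 h2 => List.Perm.eq_of_pairwise' (r := ((· ≤ ·) : Fin n → Fin n → Prop)) h1 h2 hp) ?_ ?_ ?_
  · apply List.perm_of_nodup_nodup_toFinset_eq (Finset.sort_nodup _ _)
    · refine List.Nodup.append (Finset.sort_nodup _ _) (Finset.sort_nodup _ _) ?_
      intro x hx hx'
      simp only [Finset.mem_sort, Finset.mem_filter] at hx hx'
      exact absurd (hx.2.trans hx'.2) (lt_irrefl x)
    · rw [List.toFinset_append]
      simp only [Finset.sort_toFinset]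
      rw [hsetS]
  · exact Finset.pairwise_sort _ _
  · rw [List.pairwise_append]
    refine ⟨Finset.pairwise_sort _ _, Finset.pairwise_sort _ _, ?_⟩
    intro x hx y hy
    have hx' := Finset.mem_filter.1 (Finset.mem_sort _ |>.1 hx)
    have hy' := Finset.mem_filter.1 (Finset.mem_sort _ |>.1 hy)
    exact le_of_lt (hx'.2.trans hy'.2)

lemma cardSplit (t : Finset (Fin n)) (a : Fin n) (ha : a ∉ t) :
    (t.filter (· < a)).card + (t.filter (a < ·)).card = t.card := by
  have : t.filter (a < ·) = t.filter (fun x => ¬ x < a) := by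
    apply Finset.filter_congr
    intro x hx
    have hxa : x ≠ a := fun h => ha (h ▸ hx)
    simp only [not_lt]
    constructor
    · exact le_of_lt
    · intro h
      exact lt_of_le_of_ne h (Ne.symm hxa)
  rw [this, Finset.card_filter_add_card_filter_not]

variable (g : Fin n → A)
  (hg2 : ∀ a b : Fin n, a ≠ b → g a * g b = -(g b * g a))

include hg2

lemma clLeftIns (s : Finset (Fin n)) (a : Fin n) (ha : a ∉ s) :
    g a * cliffProd g s =
      ((-1 : ℤ) ^ (s.filter (· < a)).card) • cliffProd g (insert a s) := by
  unfold cliffProd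
  rw [sortSplitIns s a ha, sortSplitNot s a ha]
  simp only [List.map_append, List.prod_append, List.map_cons, List.prod_cons]
  rw [← mul_assoc, clMove g hg2 a _ (by simp [Finset.mem_sort]), smul_mul_assoc,
    Finset.length_sort, mul_assoc]

lemma clRightIns (s : Finset (Fin n)) (a : Fin n) (ha : a ∉ s) :
    cliffProd g s * g a =
      ((-1 : ℤ) ^ (s.filter (a < ·)).card) • cliffProd g (insert a s) := by
  unfold cliffProd
  rw [sortSplitIns s a ha, sortSplitNot s a ha]
  simp only [List.map_append, List.prod_append, List.map_cons, List.prod_cons]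
  have h2 := clMove g hg2 a ((s.filter (a < ·)).sort (· ≤ ·)) (by simp [Finset.mem_sort])
  have : ((s.filter (a < ·)).sort (· ≤ ·) |>.map g).prod * g a
      = ((-1 : ℤ) ^ (s.filter (a < ·)).card) • (g a * ((s.filter (a < ·)).sort (· ≤ ·) |>.map g).prod) := by
    rw [h2, smul_smul, Finset.length_sort, ← pow_add, ← two_mul,
      pow_mul, neg_one_sq, one_pow, one_smul]
  rw [mul_assoc, this, mul_smul_comm]

variable (p : ℕ) (hgsq : ∀ a : Fin n, g a * g a = ((eta p a a : ℤ) : A))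

include hgsq

lemma clLeftMem (s : Finset (Fin n)) (a : Fin n) (ha : a ∈ s) :
    g a * cliffProd g s =
      ((-1 : ℤ) ^ ((s.erase a).filter (· < a)).card * eta p a a) • cliffProd g (s.erase a) := by
  set t := s.erase a with ht
  have ha' : a ∉ t := Finset.notMem_erase a s
  have hs : s = insert a t := (Finset.insert_erase ha).symm
  unfold cliffProd
  rw [hs, sortSplitIns t a ha', sortSplitNot t a ha']
  simp only [List.map_append, List.prod_append, List.map_cons, List.prod_cons]
  rw [← mul_assoc, clMove g hg2 a _ (by simp [Finset.mem_sort]), smul_mul_assoc,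
    Finset.length_sort, mul_assoc, ← mul_assoc (g a), hgsq a, ← zsmul_eq_mul,
    mul_smul_comm, smul_smul]

lemma clRightMem (s : Finset (Fin n)) (a : Fin n) (ha : a ∈ s) :
    cliffProd g s * g a =
      ((-1 : ℤ) ^ ((s.erase a).filter (a < ·)).card * eta p a a) • cliffProd g (s.erase a) := by
  set t := s.erase a with ht
  have ha' : a ∉ t := Finset.notMem_erase a s
  have hs : s = insert a t := (Finset.insert_erase ha).symm
  unfold cliffProd
  rw [hs, sortSplitIns t a ha', sortSplitNot t a ha']
  simp only [List.map_append, List.prod_append, List.map_cons, List.prod_cons]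
  have h2 := clMove g hg2 a ((t.filter (a < ·)).sort (· ≤ ·)) (by simp [Finset.mem_sort])
  have hflip : ((t.filter (a < ·)).sort (· ≤ ·) |>.map g).prod * g a
      = ((-1 : ℤ) ^ (t.filter (a < ·)).card) • (g a * ((t.filter (a < ·)).sort (· ≤ ·) |>.map g).prod) := by
    rw [h2, smul_smul, Finset.length_sort, ← pow_add, ← two_mul,
      pow_mul, neg_one_sq, one_pow, one_smul]
  rw [mul_assoc, mul_assoc, hflip, mul_smul_comm, mul_smul_comm, ← mul_assoc (g a),
    hgsq a, ← zsmul_eq_mul, mul_smul_comm, smul_smul]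

end aux

lemma etaSq (p : ℕ) {n : ℕ} (a : Fin n) : eta p a a = 1 ∨ eta p a a = -1 := by
  unfold eta; split_ifs <;> simp_all

section trace

variable {F : Type*} [RCLike F] {n p : ℕ} {A : Type*} [Ring A] [Algebra F A]
  (bE : Module.Basis (Finset (Fin n)) F A)

/-- coordinate of a basis vector -/
lemma coordBasis (t : Finset (Fin n)) :
    bE.coord Finset.univ (bE t) = if t = Finset.univ then 1 else 0 := by
  rw [Module.Basis.coord_apply, Module.Basis.repr_self, Finsupp.single_apply]

variable (e : Fin n → A)
  (he2 : ∀ a b : Fin n, a ≠ b → e a * e b = -(e b * e a))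
  (hesq : ∀ a : Fin n, e a * e a = ((eta p a a : ℤ) : A))
  (hbE : ∀ s, bE s = cliffProd e s)
  (hodd : Odd n)

include he2 hesq hbE hodd

lemma traceGen (a : Fin n) (u : A) :
    bE.coord Finset.univ (u * e a) = bE.coord Finset.univ (e a * u) := by
  have key : (bE.coord Finset.univ).comp (LinearMap.mulRight F (e a))
      = (bE.coord Finset.univ).comp (LinearMap.mulLeft F (e a)) := by
    apply bE.ext
    intro s
    simp only [LinearMap.coe_comp, Function.comp_apply, LinearMap.mulRight_apply,
      LinearMap.mulLeft_apply, hbE]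
    by_cases ha : a ∈ s
    · rw [clRightMem e he2 p hesq s a ha, clLeftMem e he2 p hesq s a ha,
        map_zsmul, map_zsmul, ← hbE, coordBasis]
      have : s.erase a ≠ Finset.univ := by
        intro h
        exact (Finset.notMem_erase a s) (h ▸ Finset.mem_univ a)
      simp [this]
    · rw [clRightIns e he2 s a ha, clLeftIns e he2 s a ha,
        map_zsmul, map_zsmul, ← hbE, coordBasis]
      by_cases hins : insert a s = Finset.univ
      · simp only [hins, if_pos rfl]
        have hcards : (s.filter (· < a)).card + (s.filter (a < ·)).card = s.card :=
          cardSplit s a ha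
        have hcard : s.card + 1 = n := by
          have := Finset.card_insert_of_notMem ha
          rw [hins, Finset.card_univ, Fintype.card_fin] at this
          omega
        have heven : Even ((s.filter (· < a)).card + (s.filter (a < ·)).card) := by
          rcases hodd with ⟨m, hm⟩
          rw [hcards]
          exact ⟨m, by omega⟩
        have hpar : ((-1 : ℤ) ^ (s.filter (a < ·)).card) = ((-1 : ℤ) ^ (s.filter (· < a)).card) := by
          rcases Nat.even_or_odd (s.filter (· < a)).card with hE | hO
          · have hE2 : Even (s.filter (a < ·)).card := by
              rcases hE with ⟨i, hi⟩
              rcases heven with ⟨j, hj⟩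
              exact ⟨j - i, by omega⟩
            rw [hE.neg_one_pow, hE2.neg_one_pow]
          · have hO2 : Odd (s.filter (a < ·)).card := by
              rcases hO with ⟨i, hi⟩
              rcases heven with ⟨j, hj⟩
              exact ⟨j - i - 1, by omega⟩
            rw [hO.neg_one_pow, hO2.neg_one_pow]
        rw [hpar]
      · simp [hins]
  exact congrArg (fun f => f u) key

lemma traceList (l : List (Fin n)) : ∀ u : A,
    bE.coord Finset.univ (u * (l.map e).prod) = bE.coord Finset.univ ((l.map e).prod * u) := by
  induction l with
  | nil => simp
  | cons a l ih =>
    intro u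
    simp only [List.map_cons, List.prod_cons]
    rw [← mul_assoc, ih (u * e a), ← mul_assoc,
      traceGen bE e he2 hesq hbE hodd a ((l.map e).prod * u), mul_assoc]

lemma traceMul (u v : A) :
    bE.coord Finset.univ (u * v) = bE.coord Finset.univ (v * u) := by
  have key : (bE.coord Finset.univ).comp (LinearMap.mulLeft F u)
      = (bE.coord Finset.univ).comp (LinearMap.mulRight F u) := by
    apply bE.ext
    intro t
    simp only [LinearMap.coe_comp, Function.comp_apply, LinearMap.mulRight_apply,
      LinearMap.mulLeft_apply, hbE]
    exact (traceList bE e he2 hesq hbE hodd (t.sort (· ≤ ·)) u : _)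
  exact congrArg (fun f => f v) key

end trace

/-- Let `γ^1,…,γ^n ∈ Cl(p,q)` satisfy the Clifford relations, with `n = p + q` odd.
Then `π(γ^A) = 0` for every ordered multi-index of length `1 ≤ |A| ≤ n − 1`, where `π`
is the coefficient of the volume element `e^{1…n}` in the standard basis `{e^A}`. -/
theorem stmt6 {F : Type*} [RCLike F] (p q n : ℕ) (hn : n = p + q) (hodd : Odd n)
    {A : Type*} [Ring A] [Algebra F A]
    (e : Fin n → A)
    (hrele : ∀ a b : Fin n, e a * e b + e b * e a = ((2 * eta p a b : ℤ) : A))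
    (bE : Module.Basis (Finset (Fin n)) F A)
    (hbE : ∀ s, bE s = cliffProd e s)
    (γ : Fin n → A)
    (hrel : ∀ a b : Fin n, γ a * γ b + γ b * γ a = ((2 * eta p a b : ℤ) : A))
    (s : Finset (Fin n)) (hs1 : 1 ≤ s.card) (hs2 : s.card ≤ n - 1) :
    bE.repr (cliffProd γ s) Finset.univ = 0 := by
  classical
  -- derived relations, for both `e` and `γ`
  have anti : ∀ (g : Fin n → A),
      (∀ a b : Fin n, g a * g b + g b * g a = ((2 * eta p a b : ℤ) : A)) →
      ∀ a b : Fin n, a ≠ b → g a * g b = -(g b * g a) := by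
    intro g hg a b hab
    have h := hg a b
    have hz : eta p a b = 0 := by simp [eta, hab]
    rw [hz] at h
    simp only [mul_zero, Int.cast_zero] at h
    exact eq_neg_of_add_eq_zero_left h
  have sq : ∀ (g : Fin n → A),
      (∀ a b : Fin n, g a * g b + g b * g a = ((2 * eta p a b : ℤ) : A)) →
      ∀ a : Fin n, g a * g a = ((eta p a a : ℤ) : A) := by
    intro g hg a
    have h := hg a a
    apply smul_right_injective A (two_ne_zero (α := F))
    show (2:F) • (g a * g a) = (2:F) • (((eta p a a : ℤ) : A))
    rw [two_smul, h, two_smul]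
    push_cast
    rw [two_mul]
  have he2 := anti e hrele
  have hesq := sq e hrele
  have hγ2 := anti γ hrel
  have hγsq := sq γ hrel
  set U := cliffProd γ s with hU
  set π := bE.coord Finset.univ with hπ
  -- find `a` with `γ a * U = -(U * γ a)`
  have hne : n ≠ 0 := by rcases hodd with ⟨m, hm⟩; omega
  obtain ⟨a, hanti⟩ : ∃ a : Fin n, γ a * U = -(U * γ a) := by
    rcases Nat.even_or_odd s.card with hE | hO
    · -- even: pick a ∈ s
      obtain ⟨a, ha⟩ : s.Nonempty := Finset.card_pos.1 hs1
      refine ⟨a, ?_⟩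
      rw [hU, clLeftMem γ hγ2 p hγsq s a ha, clRightMem γ hγ2 p hγsq s a ha]
      have hcards := cardSplit (s.erase a) a (Finset.notMem_erase a s)
      have hcerase : (s.erase a).card = s.card - 1 := Finset.card_erase_of_mem ha
      have hoddsum : Odd (((s.erase a).filter (· < a)).card + ((s.erase a).filter (a < ·)).card) := by
        rcases hE with ⟨m, hm⟩
        rw [hcards, hcerase]
        exact ⟨m - 1, by omega⟩
      have hpar : ((-1 : ℤ) ^ ((s.erase a).filter (· < a)).card)
          = -((-1 : ℤ) ^ ((s.erase a).filter (a < ·)).card) := by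
        rcases Nat.even_or_odd ((s.erase a).filter (· < a)).card with h1 | h1
        · have h2 : Odd ((s.erase a).filter (a < ·)).card := by
            rcases h1 with ⟨i, hi⟩; rcases hoddsum with ⟨j, hj⟩
            exact ⟨j - i, by omega⟩
          rw [h1.neg_one_pow, h2.neg_one_pow]; ring
        · have h2 : Even ((s.erase a).filter (a < ·)).card := by
            rcases h1 with ⟨i, hi⟩; rcases hoddsum with ⟨j, hj⟩
            exact ⟨j - i, by omega⟩
          rw [h1.neg_one_pow, h2.neg_one_pow]
      rw [hpar, neg_mul, neg_smul]
    · -- odd: pick a ∉ s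
      have hsne : s ≠ Finset.univ := by
        intro h
        rw [h, Finset.card_univ, Fintype.card_fin] at hs2
        omega
      obtain ⟨a, ha⟩ : ∃ a, a ∉ s := by
        by_contra h
        push_neg at h
        exact hsne (Finset.eq_univ_iff_forall.2 h)
      refine ⟨a, ?_⟩
      have hmv := clMove γ hγ2 a (s.sort (· ≤ ·)) (by simpa [Finset.mem_sort] using ha)
      rw [Finset.length_sort] at hmv
      rw [hU]
      show γ a * ((s.sort (· ≤ ·)).map γ).prod = -(((s.sort (· ≤ ·)).map γ).prod * γ a)
      rw [hmv, hO.neg_one_pow, neg_zsmul, one_zsmul]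
  -- the trace argument
  have htr := traceMul bE e he2 hesq hbE hodd (γ a) (U * γ a)
  have hUγ : U * γ a = -(γ a * U) := by rw [hanti, neg_neg]
  have hrhs : (U * γ a) * γ a = (eta p a a) • U := by
    rw [mul_assoc, hγsq a, ← (Int.cast_commute (eta p a a) U).eq, ← zsmul_eq_mul]
  have hlhs : γ a * (U * γ a) = -((eta p a a) • U) := by
    rw [hUγ, mul_neg, ← mul_assoc, hγsq a, ← zsmul_eq_mul]
  rw [hlhs, hrhs, map_neg, map_zsmul] at htr
  have hzero : eta p a a • π U = 0 := by
    have h2 : eta p a a • π U + eta p a a • π U = 0 := by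
      nth_rewrite 1 [← neg_neg (eta p a a • π U)]
      rw [htr]; ring
    have h3 : (2 : F) * (eta p a a • π U) = 0 := by
      rw [two_mul]; exact h2
    rcases mul_eq_zero.1 h3 with h | h
    · exact absurd h (two_ne_zero)
    · exact h
  have hπU : π U = 0 := by
    rw [zsmul_eq_mul] at hzero
    rcases mul_eq_zero.1 hzero with h | h
    · exfalso
      rcases etaSq p a with he | he <;> rw [he] at h <;> simp at h
    · exact h
  simpa [hπ, Module.Basis.coord_apply] using hπU
end

section
/- Let γ^1,...,γ^n and β^1,...,β^n be two sets of elements of Cl(p,q) each satisfying the Clifford anticommutation relations with the same η. Define H(U) = (1/2^n) ∑_A β^A U (γ^A)^{-1}, the sum over all 2^n ordered multi-indices A. Then for every multi-index B, β^B H(U) = H(U) γ^B; in particular β^b H(U) = H(U) γ^b for all b = 1,...,n. -/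
section aux

variable {F : Type*} [RCLike F] {n p : ℕ} {A : Type*} [Ring A] [Algebra F A]

lemma eta_diag_sq (p : ℕ) (a : Fin n) : eta p a a * eta p a a = 1 := by
  rcases lt_or_ge (a : ℕ) p with h | h
  · simp [eta, h]
  · simp [eta, not_lt.2 h]

lemma two_add_cancel (F : Type*) [RCLike F] {A : Type*} [Ring A] [Algebra F A]
    {x y : A} (h : x + x = y + y) : x = y := by
  have h2 : (2 : F) • x = (2 : F) • y := by rw [two_smul, two_smul]; exact h
  calc x = (2 : F)⁻¹ • ((2 : F) • x) := (inv_smul_smul₀ two_ne_zero x).symm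
  _ = (2 : F)⁻¹ • ((2 : F) • y) := by rw [h2]
  _ = y := inv_smul_smul₀ two_ne_zero y

variable {e : Fin n → A}

lemma sq_eq (F : Type*) [RCLike F] [Algebra F A] (hrel : ∀ a b : Fin n, e a * e b + e b * e a = ((2 * eta p a b : ℤ) : A))
    (a : Fin n) : e a * e a = ((eta p a a : ℤ) : A) := by
  have h := hrel a a
  apply two_add_cancel F
  rw [h]; push_cast; rw [two_mul]

lemma anticomm (F : Type*) [RCLike F] [Algebra F A] (hrel : ∀ a b : Fin n, e a * e b + e b * e a = ((2 * eta p a b : ℤ) : A))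
    {a b : Fin n} (h : a ≠ b) : e a * e b = -(e b * e a) := by
  have h' := hrel a b
  rw [eta, if_neg h] at h'
  simp only [mul_zero, Int.cast_zero] at h'
  exact eq_neg_of_add_eq_zero_left h'

lemma cliffProd_insert_min {a : Fin n} {s : Finset (Fin n)} (h : ∀ b ∈ s, a < b) :
    cliffProd e (insert a s) = e a * cliffProd e s := by
  unfold cliffProd
  rw [Finset.sort_insert (· ≤ ·) (fun b hb => (h b hb).le) (fun ha => lt_irrefl a (h a ha))]
  simp

def csign (p : ℕ) {n : ℕ} (a : Fin n) (s : Finset (Fin n)) : ℤ :=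
  (-1) ^ (s.filter (· < a)).card * (if a ∈ s then eta p a a else 1)

lemma csign_sq (p : ℕ) (a : Fin n) (s : Finset (Fin n)) : csign p a s * csign p a s = 1 := by
  unfold csign
  have h1 : ((-1 : ℤ) ^ (s.filter (· < a)).card) * ((-1 : ℤ) ^ (s.filter (· < a)).card) = 1 := by
    rw [← pow_add]; exact (neg_one_pow_eq_one_iff_even (by norm_num)).2 (Even.add_self _)
  have h2 : (if a ∈ s then eta p a a else 1) * (if a ∈ s then eta p a a else 1) = 1 := by
    split
    · exact eta_diag_sq p a
    · norm_num
  calc ((-1:ℤ) ^ (s.filter (· < a)).card * _) * ((-1:ℤ) ^ (s.filter (· < a)).card * _)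
      = ((-1:ℤ) ^ (s.filter (· < a)).card * (-1:ℤ) ^ (s.filter (· < a)).card) *
        ((if a ∈ s then eta p a a else 1) * (if a ∈ s then eta p a a else 1)) := by ring
  _ = 1 := by rw [h1, h2, one_mul]

lemma mul_cliffProd (F : Type*) [RCLike F] [Algebra F A] (hrel : ∀ a b : Fin n, e a * e b + e b * e a = ((2 * eta p a b : ℤ) : A)) :
    ∀ (s : Finset (Fin n)) (a : Fin n),
      e a * cliffProd e s = csign p a s • cliffProd e (symmDiff s {a}) := by
  intro s
  induction s using Finset.strongInduction with
  | _ s ih =>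
    intro a
    rcases s.eq_empty_or_nonempty with rfl | hs
    · have h1 : symmDiff (∅ : Finset (Fin n)) {a} = {a} := by
        ext x; simp [Finset.mem_symmDiff]
      have h2 : csign p a (∅ : Finset (Fin n)) = 1 := by simp [csign]
      rw [h1, h2, one_smul]
      simp [cliffProd, Finset.sort_empty, Finset.sort_singleton]
    · set b := s.min' hs with hbdef
      have hbs : b ∈ s := s.min'_mem hs
      set s' := s.erase b with hs'def
      have hbs' : b ∉ s' := Finset.notMem_erase b s
      have hmin : ∀ c ∈ s', b < c := fun c hc =>
        lt_of_le_of_ne (s.min'_le c (Finset.mem_of_mem_erase hc)) (Ne.symm (Finset.ne_of_mem_erase hc))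
      have hins : insert b s' = s := Finset.insert_erase hbs
      have hsplit : cliffProd e s = e b * cliffProd e s' := by
        rw [← hins]; exact cliffProd_insert_min hmin
      rcases lt_trichotomy a b with hab | hab | hab
      · -- a < b : a < everything in s, a ∉ s
        have hlt : ∀ c ∈ s, a < c := fun c hc => lt_of_lt_of_le hab (s.min'_le c hc)
        have has : a ∉ s := fun h => lt_irrefl a (hlt a h)
        have hfilt : s.filter (· < a) = ∅ := by
          rw [Finset.filter_eq_empty_iff]; intro c hc; exact not_lt.2 (hlt c hc).le
        have hc : csign p a s = 1 := by simp [csign, hfilt, has]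
        have hsd : symmDiff s {a} = insert a s := by
          ext x; simp only [Finset.mem_symmDiff, Finset.mem_singleton, Finset.mem_insert]
          by_cases hx : x = a
          · subst hx; simp [has]
          · simp [hx]
        rw [hc, one_smul, hsd, cliffProd_insert_min hlt]
      · -- a = b
        have has : a ∈ s := by rw [hab]; exact hbs
        have hfilt : s.filter (· < a) = ∅ := by
          rw [Finset.filter_eq_empty_iff]; intro c hc
          rw [hab]; exact not_lt.2 (s.min'_le c hc)
        have hc : csign p a s = eta p a a := by simp [csign, hfilt, has]
        have hsd : symmDiff s {a} = s' := by
          ext x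
          simp only [Finset.mem_symmDiff, Finset.mem_singleton, hs'def, Finset.mem_erase, ← hab]
          constructor
          · rintro (⟨h1, h2⟩ | ⟨h1, h2⟩)
            · exact ⟨h2, h1⟩
            · exact absurd (h1 ▸ has) h2
          · rintro ⟨h1, h2⟩; exact Or.inl ⟨h2, h1⟩
        have hsplit' : cliffProd e s = e a * cliffProd e s' := by rw [hab]; exact hsplit
        rw [hsplit', ← mul_assoc, sq_eq F hrel, hc, hsd, zsmul_eq_mul]
      · -- b < a
        have hba : b ≠ a := ne_of_lt hab
        have hss : s' ⊂ s := Finset.erase_ssubset hbs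
        have key := ih s' hss a
        have hsd : insert b (symmDiff s' {a}) = symmDiff s {a} := by
          ext x
          by_cases hx : x = b
          · subst hx
            simp only [Finset.mem_insert, Finset.mem_symmDiff, Finset.mem_singleton]
            tauto
          · simp only [Finset.mem_insert, Finset.mem_symmDiff, Finset.mem_singleton,
              hs'def, Finset.mem_erase]
            constructor
            · rintro (rfl | (⟨⟨h1, h2⟩, h3⟩ | ⟨h1, h2⟩)) <;> tauto
            · rintro (⟨h1, h2⟩ | ⟨h1, h2⟩) <;> tauto
        have hminsd : ∀ c ∈ symmDiff s' {a}, b < c := by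
          intro c hc
          rw [Finset.mem_symmDiff] at hc
          rcases hc with ⟨h1, _⟩ | ⟨h1, _⟩
          · exact hmin c h1
          · rw [Finset.mem_singleton] at h1; subst h1; exact hab
        have hcs : csign p a s = -csign p a s' := by
          have hfeq : s.filter (· < a) = insert b (s'.filter (· < a)) := by
            ext x
            by_cases hx : x = b
            · subst hx; simp [Finset.mem_filter, hbs, hab]
            · simp [Finset.mem_filter, Finset.mem_insert, hx, hs'def, Finset.mem_erase]
          have hbnot : b ∉ s'.filter (· < a) := fun h => hbs' (Finset.mem_of_mem_filter b h)
          have hcard : (s.filter (· < a)).card = (s'.filter (· < a)).card + 1 := by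
            rw [hfeq, Finset.card_insert_of_notMem hbnot]
          have hif : (if a ∈ s then eta p a a else 1) = (if a ∈ s' then eta p a a else 1) :=
            if_congr (by simp [hs'def, Finset.mem_erase, Ne.symm hba]) rfl rfl
          unfold csign
          rw [hcard, hif, pow_succ]
          ring
        calc e a * cliffProd e s = e a * (e b * cliffProd e s') := by rw [hsplit]
        _ = (e a * e b) * cliffProd e s' := by rw [mul_assoc]
        _ = -(e b * e a) * cliffProd e s' := by rw [anticomm F hrel (Ne.symm hba)]
        _ = -(e b * (e a * cliffProd e s')) := by rw [neg_mul, mul_assoc]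
        _ = -(e b * (csign p a s' • cliffProd e (symmDiff s' {a}))) := by rw [key]
        _ = -(csign p a s' • (e b * cliffProd e (symmDiff s' {a}))) := by rw [mul_smul_comm]
        _ = -(csign p a s' • cliffProd e (insert b (symmDiff s' {a}))) := by
              rw [cliffProd_insert_min hminsd]
        _ = csign p a s • cliffProd e (symmDiff s {a}) := by rw [hsd, hcs, neg_smul]

end aux

section main

variable {F : Type*} [RCLike F] {n p : ℕ} {A : Type*} [Ring A] [Algebra F A]

lemma cliffProd_empty_s10 {e : Fin n → A} : cliffProd e (∅ : Finset (Fin n)) = 1 := by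
  simp [cliffProd, Finset.sort_empty]

lemma cliffProd_singleton {e : Fin n → A} (a : Fin n) : cliffProd e {a} = e a := by
  simp [cliffProd, Finset.sort_singleton]

lemma pair_mul (F : Type*) [RCLike F] [Algebra F A] {β γ : Fin n → A}
    (hβ : ∀ a b : Fin n, β a * β b + β b * β a = ((2 * eta p a b : ℤ) : A))
    (hγ : ∀ a b : Fin n, γ a * γ b + γ b * γ a = ((2 * eta p a b : ℤ) : A)) :
    ∀ (t s : Finset (Fin n)), ∃ c : ℤ, c * c = 1 ∧
      cliffProd β t * cliffProd β s = c • cliffProd β (symmDiff t s) ∧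
      cliffProd γ t * cliffProd γ s = c • cliffProd γ (symmDiff t s) := by
  intro t
  induction t using Finset.strongInduction with
  | _ t ih =>
    intro s
    rcases t.eq_empty_or_nonempty with rfl | ht
    · have hsd : symmDiff (∅ : Finset (Fin n)) s = s := by
        ext x; simp [Finset.mem_symmDiff]
      exact ⟨1, by norm_num, by simp [cliffProd_empty_s10, hsd], by simp [cliffProd_empty_s10, hsd]⟩
    · set b := t.min' ht with hbdef
      have hbt : b ∈ t := t.min'_mem ht
      set t' := t.erase b with ht'def
      have hbt' : b ∉ t' := Finset.notMem_erase b t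
      have hmin : ∀ c ∈ t', b < c := fun c hc =>
        lt_of_le_of_ne (t.min'_le c (Finset.mem_of_mem_erase hc)) (Ne.symm (Finset.ne_of_mem_erase hc))
      have hins : insert b t' = t := Finset.insert_erase hbt
      have hss : t' ⊂ t := Finset.erase_ssubset hbt
      obtain ⟨c, hc1, hcβ, hcγ⟩ := ih t' hss s
      have hsd : symmDiff (symmDiff t' s) {b} = symmDiff t s := by
        ext x
        by_cases hx : x = b
        · subst hx
          simp only [Finset.mem_symmDiff, Finset.mem_singleton, ht'def, Finset.mem_erase]
          tauto
        · simp only [Finset.mem_symmDiff, Finset.mem_singleton, ht'def, Finset.mem_erase]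
          tauto
      have hsplitβ : cliffProd β t = β b * cliffProd β t' := by
        rw [← hins]; exact cliffProd_insert_min hmin
      have hsplitγ : cliffProd γ t = γ b * cliffProd γ t' := by
        rw [← hins]; exact cliffProd_insert_min hmin
      refine ⟨c * csign p b (symmDiff t' s), ?_, ?_, ?_⟩
      · rw [mul_mul_mul_comm, hc1, csign_sq, mul_one]
      · rw [hsplitβ, mul_assoc, hcβ, mul_smul_comm, mul_cliffProd F hβ, smul_smul, hsd]
      · rw [hsplitγ, mul_assoc, hcγ, mul_smul_comm, mul_cliffProd F hγ, smul_smul, hsd]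

lemma cliffProd_unit (F : Type*) [RCLike F] [Algebra F A] {γ : Fin n → A}
    (hγ : ∀ a b : Fin n, γ a * γ b + γ b * γ a = ((2 * eta p a b : ℤ) : A))
    (s : Finset (Fin n)) : ∃ c : ℤ, c * c = 1 ∧
      cliffProd γ s * (c • cliffProd γ s) = 1 ∧ (c • cliffProd γ s) * cliffProd γ s = 1 := by
  obtain ⟨c, hc1, -, hcγ⟩ := pair_mul F hγ hγ s s
  rw [symmDiff_self, Finset.bot_eq_empty, cliffProd_empty_s10] at hcγ
  refine ⟨c, hc1, ?_, ?_⟩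
  · rw [mul_smul_comm, hcγ, smul_smul, hc1, one_smul]
  · rw [smul_mul_assoc, hcγ, smul_smul, hc1, one_smul]

lemma cliffProd_isUnit (F : Type*) [RCLike F] [Algebra F A] {γ : Fin n → A}
    (hγ : ∀ a b : Fin n, γ a * γ b + γ b * γ a = ((2 * eta p a b : ℤ) : A))
    (s : Finset (Fin n)) : IsUnit (cliffProd γ s) := by
  obtain ⟨c, -, h1, h2⟩ := cliffProd_unit F hγ s
  exact ⟨⟨cliffProd γ s, c • cliffProd γ s, h1, h2⟩, rfl⟩

lemma term_eq (F : Type*) [RCLike F] [Algebra F A] {β γ : Fin n → A}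
    (hβ : ∀ a b : Fin n, β a * β b + β b * β a = ((2 * eta p a b : ℤ) : A))
    (hγ : ∀ a b : Fin n, γ a * γ b + γ b * γ a = ((2 * eta p a b : ℤ) : A))
    (U : A) (B s : Finset (Fin n)) :
    cliffProd β B * (cliffProd β (symmDiff B s) * U * Ring.inverse (cliffProd γ (symmDiff B s)))
      = cliffProd β s * U * Ring.inverse (cliffProd γ s) * cliffProd γ B := by
  obtain ⟨c, hc1, hcβ, hcγ⟩ := pair_mul F hβ hγ B (symmDiff B s)
  rw [symmDiff_symmDiff_cancel_left] at hcβ hcγ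
  have hus : IsUnit (cliffProd γ s) := cliffProd_isUnit F hγ s
  have huBs : IsUnit (cliffProd γ (symmDiff B s)) := cliffProd_isUnit F hγ (symmDiff B s)
  obtain ⟨u, hu⟩ := huBs
  have hinv : Ring.inverse (cliffProd γ (symmDiff B s))
      = c • (Ring.inverse (cliffProd γ s) * cliffProd γ B) := by
    rw [← hu, Ring.inverse_unit]
    refine Units.inv_eq_of_mul_eq_one_left (u := u) ?_
    rw [hu, smul_mul_assoc, mul_assoc, hcγ, mul_smul_comm, smul_smul, hc1, one_smul,
      Ring.inverse_mul_cancel _ hus]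
  rw [← mul_assoc, ← mul_assoc, hcβ, hinv, smul_mul_assoc, smul_mul_assoc, mul_smul_comm,
    smul_smul, hc1, one_smul, ← mul_assoc]

end main

/-- The generalized Reynolds operator `H(U) = 2⁻ⁿ ∑_A β^A U (γ^A)⁻¹`. -/
noncomputable def genH (F : Type*) [RCLike F] {n : ℕ} {A : Type*} [Ring A] [Algebra F A]
    (β γ : Fin n → A) (U : A) : A :=
  ((2 : F) ^ n)⁻¹ • ∑ s : Finset (Fin n), cliffProd β s * U * Ring.inverse (cliffProd γ s)

/-- Let `γ^a` and `β^a` be two sets of elements of `Cl(p,q)` satisfying the Clifford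
relations with the same `η`, and `H(U) = 2⁻ⁿ ∑_A β^A U (γ^A)⁻¹`. Then for every
multi-index `B`, `β^B H(U) = H(U) γ^B`; in particular `β^b H(U) = H(U) γ^b` for all `b`. -/
theorem stmt10 {F : Type*} [RCLike F] (p q n : ℕ) (hn : n = p + q)
    {A : Type*} [Ring A] [Algebra F A]
    (e : Fin n → A)
    (hrele : ∀ a b : Fin n, e a * e b + e b * e a = ((2 * eta p a b : ℤ) : A))
    (bE : Module.Basis (Finset (Fin n)) F A)
    (hbE : ∀ s, bE s = cliffProd e s)
    (γ β : Fin n → A)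
    (hγ : ∀ a b : Fin n, γ a * γ b + γ b * γ a = ((2 * eta p a b : ℤ) : A))
    (hβ : ∀ a b : Fin n, β a * β b + β b * β a = ((2 * eta p a b : ℤ) : A))
    (U : A) :
    (∀ s : Finset (Fin n),
      cliffProd β s * genH F β γ U = genH F β γ U * cliffProd γ s) ∧
    (∀ a : Fin n, β a * genH F β γ U = genH F β γ U * γ a) := by
  have main : ∀ B : Finset (Fin n),
      cliffProd β B * genH F β γ U = genH F β γ U * cliffProd γ B := by
    intro B
    unfold genH
    rw [mul_smul_comm, smul_mul_assoc]
    congr 1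
    rw [Finset.mul_sum, Finset.sum_mul]
    refine Fintype.sum_equiv
      (Function.Involutive.toPerm (fun s => symmDiff B s)
        (fun s => symmDiff_symmDiff_cancel_left B s)) _ _ ?_
    intro s
    have h := term_eq F hβ hγ U B (symmDiff B s)
    rw [symmDiff_symmDiff_cancel_left] at h
    simpa [Function.Involutive.toPerm] using h
  exact ⟨main, fun a => by
    have := main {a}
    rwa [cliffProd_singleton, cliffProd_singleton] at this⟩
end

section
/- Let γ^a and β^a (a=1,...,n) be two sets of elements of Cl(p,q), n = p+q even, each satisfying the Clifford anticommutation relations, with both {γ^A} and {β^A} bases. Define H(U) = (1/2^n) ∑_A β^A U (γ^A)^{-1} and P(V) = (1/2^n) ∑_A γ^A V (β^A)^{-1}. Then P(V)H(U) = H(U)P(V) = Tr(V·H(U))·e for all U, V ∈ Cl(p,q). -/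
namespace Stmt13

open scoped symmDiff

/-- Clifford relations for a system of generators. -/
def CRel (p : ℕ) {n : ℕ} {A : Type*} [Ring A] (δ : Fin n → A) : Prop :=
  ∀ a b : Fin n, δ a * δ b + δ b * δ a = ((2 * eta p a b : ℤ) : A)

variable {F : Type*} [RCLike F] {n p : ℕ} {A : Type*} [Ring A] [Algebra F A]

lemma smul_cancelF {c : F} (hc : c ≠ 0) {x y : A} (h : c • x = c • y) : x = y := by
  have := congrArg (fun z => c⁻¹ • z) h
  simpa [smul_smul, inv_mul_cancel₀ hc] using this

lemma eta_diag (p : ℕ) {n : ℕ} (a : Fin n) : eta p a a = 1 ∨ eta p a a = -1 := by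
  rcases lt_or_ge (a : ℕ) p with h | h <;> simp [eta, h, not_lt.mpr]

lemma eta_off (p : ℕ) {n : ℕ} {a b : Fin n} (h : a ≠ b) : eta p a b = 0 := if_neg h

lemma pm_mul_self {z : ℤ} (h : z = 1 ∨ z = -1) : z * z = 1 := by rcases h with h | h <;> simp [h]

lemma pm_smul_smul {z : ℤ} (h : z = 1 ∨ z = -1) (x : A) : z • z • x = x := by
  rw [smul_smul, pm_mul_self h, one_smul]

/-- flip an equation `x = z • y` with `z = ±1`. -/
lemma pm_flip {z : ℤ} (h : z = 1 ∨ z = -1) {x y : A} (hxy : x = z • y) : y = z • x := by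
  rw [hxy, pm_smul_smul h]

lemma CRel.sq (F : Type*) [RCLike F] {n p : ℕ} {A : Type*} [Ring A] [Algebra F A]
    {δ : Fin n → A} (h : CRel p δ) (a : Fin n) :
    δ a * δ a = (eta p a a : ℤ) • (1 : A) := by
  have h2 := h a a
  apply smul_cancelF (two_ne_zero (α := F))
  rw [two_smul, h2]
  push_cast
  rw [Algebra.smul_def, map_ofNat, zsmul_one]

lemma CRel.anticomm {δ : Fin n → A} (h : CRel p δ) {a b : Fin n} (hab : a ≠ b) :
    δ a * δ b = -(δ b * δ a) := by
  have h2 := h a b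
  rw [eta_off p hab] at h2
  push_cast at h2
  exact eq_neg_of_add_eq_zero_left h2

lemma cliffProd_empty {n : ℕ} {A : Type*} [Ring A] (e : Fin n → A) : cliffProd e ∅ = 1 := by
  simp [cliffProd]

lemma cliffProd_insert {n : ℕ} {A : Type*} [Ring A] (e : Fin n → A) {a : Fin n}
    {s : Finset (Fin n)} (h : ∀ b ∈ s, a < b) :
    cliffProd e (insert a s) = e a * cliffProd e s := by
  have ha : a ∉ s := fun h' => lt_irrefl a (h a h')
  rw [cliffProd, Finset.sort_insert (· ≤ ·) (fun b hb => (h b hb).le) ha]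
  simp [cliffProd]

lemma pm_mul {z w : ℤ} (hz : z = 1 ∨ z = -1) (hw : w = 1 ∨ w = -1) :
    z * w = 1 ∨ z * w = -1 := by rcases hz with h | h <;> rcases hw with h' | h' <;> simp [h, h']

lemma cliffProd_singleton {n : ℕ} {A : Type*} [Ring A] (e : Fin n → A) (a : Fin n) :
    cliffProd e {a} = e a := by
  rw [show ({a} : Finset (Fin n)) = insert a ∅ from rfl,
    cliffProd_insert e (by simp), cliffProd_empty, mul_one]

lemma sd_mem {α : Type*} [DecidableEq α] {a : α} {s : Finset α} (h : a ∈ s) :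
    s ∆ {a} = s.erase a := by
  ext x
  rcases eq_or_ne x a with rfl | hx <;> simp [Finset.mem_symmDiff, Finset.mem_erase, *]

lemma sd_not_mem {α : Type*} [DecidableEq α] {a : α} {s : Finset α} (h : a ∉ s) :
    s ∆ {a} = insert a s := by
  ext x
  rcases eq_or_ne x a with rfl | hx <;> simp [Finset.mem_symmDiff, Finset.mem_insert, *]

lemma sd_sd {α : Type*} [DecidableEq α] (s : Finset α) (a : α) : s ∆ {a} ∆ {a} = s :=
  symmDiff_symmDiff_cancel_right {a} s

lemma sd_erase {α : Type*} [DecidableEq α] (s : Finset α) (a : α) :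
    (s ∆ {a}).erase a = s.erase a := by
  ext x
  rcases eq_or_ne x a with rfl | hx <;> simp [Finset.mem_symmDiff, Finset.mem_erase, *]

lemma insert_sd {α : Type*} [DecidableEq α] {a m : α} (h : a ≠ m) (t : Finset α) :
    (insert m t) ∆ {a} = insert m (t ∆ {a}) := by
  ext x
  rcases eq_or_ne x m with rfl | hx <;> rcases eq_or_ne x a with rfl | hxa <;>
    simp_all [Finset.mem_symmDiff]

lemma keyK (F : Type*) [RCLike F] {n : ℕ} (p : ℕ) {A : Type*} [Ring A] [Algebra F A]
    (a : Fin n) (s : Finset (Fin n)) :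
    ∃ z : ℤ, (z = 1 ∨ z = -1) ∧ ∀ δ : Fin n → A, CRel p δ →
      δ a * cliffProd δ s = z • cliffProd δ (s ∆ {a}) := by
  induction s using Finset.induction_on_min with
  | empty =>
    refine ⟨1, Or.inl rfl, fun δ _ => ?_⟩
    rw [sd_not_mem (Finset.notMem_empty a), cliffProd_empty, mul_one,
      show insert a (∅ : Finset (Fin n)) = {a} from rfl, cliffProd_singleton, one_smul]
  | insert m t hmt ih =>
    have hm : m ∉ t := fun h => lt_irrefl _ (hmt m h)
    rcases lt_trichotomy a m with ham | rfl | hma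
    · refine ⟨1, Or.inl rfl, fun δ hδ => ?_⟩
      have hnotmem : a ∉ insert m t := by
        intro h
        rcases Finset.mem_insert.mp h with rfl | h
        · exact lt_irrefl a ham
        · exact lt_irrefl a (ham.trans (hmt a h))
      rw [sd_not_mem hnotmem, one_smul]
      refine (cliffProd_insert δ fun b hb => ?_).symm
      rcases Finset.mem_insert.mp hb with rfl | hb
      · exact ham
      · exact ham.trans (hmt b hb)
    · refine ⟨eta p a a, eta_diag p a, fun δ hδ => ?_⟩
      rw [sd_mem (Finset.mem_insert_self a t), Finset.erase_insert hm,
        cliffProd_insert δ hmt, ← mul_assoc, CRel.sq F hδ a, smul_mul_assoc, one_mul]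
    · obtain ⟨z, hz1, hz⟩ := ih
      refine ⟨-z, by rcases hz1 with h | h <;> simp [h], fun δ hδ => ?_⟩
      have hne : a ≠ m := hma.ne'
      have h' : ∀ b ∈ t ∆ {a}, m < b := by
        intro b hb
        rcases Finset.mem_symmDiff.mp hb with ⟨hb, _⟩ | ⟨hb, _⟩
        · exact hmt b hb
        · rw [Finset.mem_singleton.mp hb]; exact hma
      rw [cliffProd_insert δ hmt, ← mul_assoc, hδ.anticomm hne, neg_mul, mul_assoc,
        hz δ hδ, mul_smul_comm, ← cliffProd_insert δ h', insert_sd hne, neg_smul]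

lemma keyE (F : Type*) [RCLike F] {n : ℕ} (p : ℕ) {A : Type*} [Ring A] [Algebra F A]
    (a : Fin n) (s : Finset (Fin n)) :
    ∀ δ : Fin n → A, CRel p δ →
      δ a * cliffProd δ s = ((-1 : ℤ) ^ (s.erase a).card) • (cliffProd δ s * δ a) := by
  induction s using Finset.induction_on_min with
  | empty => intro δ _; simp [cliffProd_empty]
  | insert m t hmt ih =>
    intro δ hδ
    have hm : m ∉ t := fun h => lt_irrefl _ (hmt m h)
    rcases eq_or_ne a m with rfl | hne
    · have ht : t.erase a = t := Finset.erase_eq_of_notMem hm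
      have h1 : δ a * cliffProd δ t = ((-1 : ℤ) ^ t.card) • (cliffProd δ t * δ a) := by
        have := ih δ hδ; rwa [ht] at this
      have h2 : cliffProd δ t * δ a = ((-1 : ℤ) ^ t.card) • (δ a * cliffProd δ t) :=
        pm_flip (by rcases Nat.even_or_odd t.card with h | h
                    · exact Or.inl (Even.neg_one_pow h)
                    · exact Or.inr (Odd.neg_one_pow h)) h1
      rw [Finset.erase_insert hm, cliffProd_insert δ hmt, mul_assoc, h2, mul_smul_comm,
        smul_smul, ← pow_add, Even.neg_one_pow ⟨t.card, rfl⟩, one_smul]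
    · have h1 := ih δ hδ
      have hcard : ((insert m t).erase a).card = (t.erase a).card + 1 := by
        rw [Finset.erase_insert_of_ne (Ne.symm hne),
          Finset.card_insert_of_notMem (fun h => hm (Finset.mem_of_mem_erase h))]
      rw [cliffProd_insert δ hmt, ← mul_assoc, hδ.anticomm hne, neg_mul, mul_assoc, h1,
        mul_smul_comm, ← mul_assoc, hcard, pow_succ, mul_neg_one, neg_smul]

lemma keyC (F : Type*) [RCLike F] {n : ℕ} (p : ℕ) {A : Type*} [Ring A] [Algebra F A]
    (s t : Finset (Fin n)) :
    ∃ z : ℤ, (z = 1 ∨ z = -1) ∧ ∀ δ : Fin n → A, CRel p δ →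
      cliffProd δ s * cliffProd δ t = z • cliffProd δ (s ∆ t) := by
  induction s using Finset.induction_on_min with
  | empty =>
    refine ⟨1, Or.inl rfl, fun δ _ => ?_⟩
    have h0 : (∅ : Finset (Fin n)) ∆ t = t := by
      ext x; simp [Finset.mem_symmDiff]
    rw [h0, cliffProd_empty, one_mul, one_smul]
  | insert m s' hms ih =>
    have hm : m ∉ s' := fun h => lt_irrefl _ (hms m h)
    obtain ⟨z1, hz1, h1⟩ := ih
    obtain ⟨z2, hz2, h2⟩ := keyK F p (A := A) m (s' ∆ t)
    refine ⟨z1 * z2, pm_mul hz1 hz2, fun δ hδ => ?_⟩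
    rw [cliffProd_insert δ hms, mul_assoc, h1 δ hδ, mul_smul_comm, h2 δ hδ, smul_smul,
      show insert m s' = s' ∆ {m} from (sd_not_mem hm).symm, symmDiff_right_comm]

lemma inverse_cliffProd {n : ℕ} {A : Type*} [Ring A] {δ : Fin n → A} {s : Finset (Fin n)}
    {c : ℤ} (hc : c = 1 ∨ c = -1) (h : cliffProd δ s * cliffProd δ s = c • 1) :
    Ring.inverse (cliffProd δ s) = c • cliffProd δ s := by
  have h1 : cliffProd δ s * (c • cliffProd δ s) = 1 := by
    rw [mul_smul_comm, h, pm_smul_smul hc]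
  have h2 : (c • cliffProd δ s) * cliffProd δ s = 1 := by
    rw [smul_mul_assoc, h, pm_smul_smul hc]
  let u : Aˣ := ⟨cliffProd δ s, c • cliffProd δ s, h1, h2⟩
  rw [show cliffProd δ s = (u : A) from rfl, Ring.inverse_unit]
  rfl

lemma int_cancel {F : Type*} [RCLike F] {n : ℕ} {A : Type*} [Ring A] [Algebra F A]
    {e : Fin n → A} (bE : Module.Basis (Finset (Fin n)) F A) (hbE : ∀ s, bE s = cliffProd e s)
    (s : Finset (Fin n)) {m m' : ℤ} (h : m • cliffProd e s = m' • cliffProd e s) : m = m' := by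
  rw [← hbE] at h
  simp only [← Int.cast_smul_eq_zsmul F] at h
  have h2 := congrArg (fun x => bE.repr x s) h
  simp only [map_smul, Module.Basis.repr_self, Finsupp.smul_single, smul_eq_mul, mul_one,
    Finsupp.single_eq_same] at h2
  exact_mod_cast h2

lemma intertwine {F : Type*} [RCLike F] {n p : ℕ} {A : Type*} [Ring A] [Algebra F A]
    {e : Fin n → A} (hrele : CRel p e)
    (bE : Module.Basis (Finset (Fin n)) F A) (hbE : ∀ s, bE s = cliffProd e s)
    {β γ : Fin n → A} (hβ : CRel p β) (hγ : CRel p γ) (a : Fin n) (U : A) :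
    β a * genH F β γ U = genH F β γ U * γ a := by
  classical
  choose zK hzK1 hzK using keyK F p (A := A)
  choose cC hcC1 hcC using fun s => keyC F p (A := A) s s
  have hsq : ∀ δ : Fin n → A, CRel p δ → ∀ s, cliffProd δ s * cliffProd δ s = cC s • 1 := by
    intro δ hδ s
    have h := hcC s δ hδ
    rwa [symmDiff_self, Finset.bot_eq_empty, cliffProd_empty] at h
  have hinv : ∀ δ : Fin n → A, CRel p δ → ∀ s,
      Ring.inverse (cliffProd δ s) = cC s • cliffProd δ s :=
    fun δ hδ s => inverse_cliffProd (hcC1 s) (hsq δ hδ s)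
  have hεpm : ∀ (b : Fin n) (s : Finset (Fin n)),
      (-1 : ℤ) ^ (s.erase b).card = 1 ∨ (-1 : ℤ) ^ (s.erase b).card = -1 := by
    intro b s
    rcases Nat.even_or_odd (s.erase b).card with h | h
    · exact Or.inl (Even.neg_one_pow h)
    · exact Or.inr (Odd.neg_one_pow h)
  have hetapm := eta_diag p a
  have hR1 : ∀ s, zK a s * zK a (s ∆ {a}) = eta p a a := by
    intro s
    apply int_cancel bE hbE s
    have h1 := hzK a s e hrele
    have h2 := hzK a (s ∆ {a}) e hrele
    rw [sd_sd] at h2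
    have key : e a * (e a * cliffProd e s) = (eta p a a : ℤ) • cliffProd e s := by
      rw [← mul_assoc, CRel.sq F hrele a, smul_mul_assoc, one_mul]
    rw [h1, mul_smul_comm, h2, smul_smul] at key
    exact key
  have hzflip : ∀ s, zK a (s ∆ {a}) = eta p a a * zK a s := by
    intro s
    have h := hR1 s
    rcases hzK1 a s with h' | h' <;> rw [h'] at h ⊢ <;> linarith
  have hR2 : ∀ s, cC (s ∆ {a}) = (-1 : ℤ) ^ (s.erase a).card * eta p a a * cC s := by
    intro s
    have h1 := hzK a s e hrele
    have h1' : cliffProd e (s ∆ {a}) = zK a s • (e a * cliffProd e s) :=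
      pm_flip (hzK1 a s) h1
    have hE' : cliffProd e s * e a
        = ((-1 : ℤ) ^ (s.erase a).card) • (e a * cliffProd e s) :=
      pm_flip (hεpm a s) (keyE F p a s e hrele)
    have key := hsq e hrele (s ∆ {a})
    rw [h1'] at key
    simp only [smul_mul_assoc, mul_smul_comm, smul_smul, mul_assoc] at key
    rw [show cliffProd e s * (e a * cliffProd e s)
        = (cliffProd e s * e a) * cliffProd e s from (mul_assoc _ _ _).symm, hE'] at key
    simp only [smul_mul_assoc, mul_smul_comm, smul_smul, mul_assoc] at key
    rw [show e a * (e a * (cliffProd e s * cliffProd e s))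
        = (e a * e a) * (cliffProd e s * cliffProd e s) from (mul_assoc _ _ _).symm,
      CRel.sq F hrele a, hsq e hrele s] at key
    simp only [smul_mul_assoc, mul_smul_comm, smul_smul, mul_assoc, one_mul, mul_one] at key
    rw [show zK a s * (zK a s * ((-1 : ℤ) ^ (s.erase a).card * (cC s * eta p a a)))
        = (-1 : ℤ) ^ (s.erase a).card * (cC s * eta p a a) by
          rw [← mul_assoc, pm_mul_self (hzK1 a s), one_mul]] at key
    apply int_cancel bE hbE ∅
    rw [cliffProd_empty, ← key]
    module
  -- main computation
  unfold genH
  rw [mul_smul_comm, smul_mul_assoc, Finset.mul_sum, Finset.sum_mul]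
  congr 1
  apply Fintype.sum_bijective (fun s => s ∆ {a})
    (Function.Involutive.bijective (fun s => sd_sd s a))
  intro s
  rw [hinv γ hγ s, hinv γ hγ (s ∆ {a})]
  have hb := hzK a s β hβ
  have hg := hzK a (s ∆ {a}) γ hγ
  rw [sd_sd] at hg
  have hgE' : cliffProd γ (s ∆ {a}) * γ a
      = ((-1 : ℤ) ^ (((s ∆ {a}).erase a)).card) • (γ a * cliffProd γ (s ∆ {a})) :=
    pm_flip (hεpm a _) (keyE F p a (s ∆ {a}) γ hγ)
  have hscal : cC s * zK a s
      = cC (s ∆ {a}) * ((-1 : ℤ) ^ ((s ∆ {a}).erase a).card * zK a (s ∆ {a})) := by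
    rw [hR2 s, hzflip s, sd_erase]
    rcases hεpm a s with h1 | h1 <;> rcases hetapm with h2 | h2 <;> rw [h1, h2] <;> ring
  calc β a * (cliffProd β s * U * (cC s • cliffProd γ s))
      = (cC s * zK a s) • (cliffProd β (s ∆ {a}) * (U * cliffProd γ s)) := by
        simp only [smul_mul_assoc, mul_smul_comm, smul_smul, mul_assoc]
        rw [show β a * (cliffProd β s * (U * cliffProd γ s))
            = (β a * cliffProd β s) * (U * cliffProd γ s) from (mul_assoc _ _ _).symm, hb]
        simp only [smul_mul_assoc, mul_smul_comm, smul_smul, mul_assoc]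
    _ = cliffProd β (s ∆ {a}) * U * (cC (s ∆ {a}) • cliffProd γ (s ∆ {a})) * γ a := by
        simp only [smul_mul_assoc, mul_smul_comm, smul_smul, mul_assoc]
        rw [hgE']
        simp only [smul_mul_assoc, mul_smul_comm, smul_smul, mul_assoc]
        rw [hg]
        simp only [smul_mul_assoc, mul_smul_comm, smul_smul, mul_assoc]
        rw [hscal]

lemma intertwineProd {F : Type*} [RCLike F] {n p : ℕ} {A : Type*} [Ring A] [Algebra F A]
    {e : Fin n → A} (hrele : CRel p e)
    (bE : Module.Basis (Finset (Fin n)) F A) (hbE : ∀ s, bE s = cliffProd e s)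
    {β γ : Fin n → A} (hβ : CRel p β) (hγ : CRel p γ) (s : Finset (Fin n)) (U : A) :
    cliffProd β s * genH F β γ U = genH F β γ U * cliffProd γ s := by
  induction s using Finset.induction_on_min with
  | empty => rw [cliffProd_empty, cliffProd_empty, one_mul, mul_one]
  | insert m t hmt ih =>
    rw [cliffProd_insert β hmt, cliffProd_insert γ hmt, mul_assoc, ih, ← mul_assoc,
      intertwine hrele bE hbE hβ hγ m U, mul_assoc]

lemma genH_mul {F : Type*} [RCLike F] {n p : ℕ} {A : Type*} [Ring A] [Algebra F A]
    {e : Fin n → A} (hrele : CRel p e)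
    (bE : Module.Basis (Finset (Fin n)) F A) (hbE : ∀ s, bE s = cliffProd e s)
    {β γ : Fin n → A} (hβ : CRel p β) (hγ : CRel p γ) (U V : A) :
    genH F γ β V * genH F β γ U = genH F γ γ (V * genH F β γ U) := by
  classical
  choose cC hcC1 hcC using fun s => keyC F p (A := A) s s
  have hsq : ∀ δ : Fin n → A, CRel p δ → ∀ s, cliffProd δ s * cliffProd δ s = cC s • 1 := by
    intro δ hδ s
    have h := hcC s δ hδ
    rwa [symmDiff_self, Finset.bot_eq_empty, cliffProd_empty] at h
  have hinv : ∀ δ : Fin n → A, CRel p δ → ∀ s,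
      Ring.inverse (cliffProd δ s) = cC s • cliffProd δ s :=
    fun δ hδ s => inverse_cliffProd (hcC1 s) (hsq δ hδ s)
  set H := genH F β γ U with hH
  rw [genH, genH, smul_mul_assoc, Finset.sum_mul]
  congr 1
  apply Finset.sum_congr rfl
  intro s _
  rw [hinv β hβ s, hinv γ hγ s]
  have h := intertwineProd hrele bE hbE hβ hγ s U
  rw [← hH] at h
  calc cliffProd γ s * V * (cC s • cliffProd β s) * H
      = cC s • (cliffProd γ s * (V * (cliffProd β s * H))) := by
        simp only [smul_mul_assoc, mul_smul_comm, smul_smul, mul_assoc]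
    _ = cC s • (cliffProd γ s * (V * (H * cliffProd γ s))) := by rw [h]
    _ = cliffProd γ s * (V * H) * (cC s • cliffProd γ s) := by
        simp only [smul_mul_assoc, mul_smul_comm, smul_smul, mul_assoc]

lemma neg_one_pow_pm (k : ℕ) : (-1 : ℤ) ^ k = 1 ∨ (-1 : ℤ) ^ k = -1 := by
  rcases Nat.even_or_odd k with h | h
  · exact Or.inl (Even.neg_one_pow h)
  · exact Or.inr (Odd.neg_one_pow h)

set_option maxHeartbeats 2000000 in
lemma reynolds_eq {F : Type*} [RCLike F] {n p : ℕ} (hne : Even n)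
    {A : Type*} [Ring A] [Algebra F A]
    {δ : Fin n → A} (hδ : CRel p δ)
    (bΔ : Module.Basis (Finset (Fin n)) F A) (hbΔ : ∀ s, bΔ s = cliffProd δ s) (W : A) :
    genH F δ δ W = (bΔ.repr (genH F δ δ W) ∅) • 1 := by
  classical
  choose zK hzK1 hzK using keyK F p (A := A)
  set R := genH F δ δ W with hR
  have hcomm : ∀ a, δ a * R = R * δ a := fun a => intertwine hδ bΔ hbΔ hδ hδ a W
  have hRsum : R = ∑ u : Finset (Fin n), bΔ.repr R u • cliffProd δ u := by
    conv_lhs => rw [← bΔ.sum_repr R]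
    exact Finset.sum_congr rfl fun u _ => by rw [hbΔ]
  have hzero : ∀ t : Finset (Fin n), t ≠ ∅ → bΔ.repr R t = 0 := by
    intro t ht
    obtain ⟨a, ha⟩ : ∃ a : Fin n, Odd ((t.erase a).card) := by
      rcases Nat.even_or_odd t.card with he | ho
      · obtain ⟨a, haa⟩ := Finset.nonempty_iff_ne_empty.mpr ht
        refine ⟨a, ?_⟩
        rw [Finset.card_erase_of_mem haa]
        exact Nat.Even.sub_odd (Finset.card_pos.mpr ⟨a, haa⟩) he odd_one
      · obtain ⟨a, haa⟩ : ∃ a, a ∉ t := by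
          by_contra hcon
          push_neg at hcon
          have huniv : t = Finset.univ := Finset.eq_univ_iff_forall.mpr hcon
          rw [huniv, Finset.card_univ, Fintype.card_fin] at ho
          exact (Nat.not_odd_iff_even.mpr hne) ho
        exact ⟨a, by rw [Finset.erase_eq_of_notMem haa]; exact ho⟩
    have hL : δ a * R = ∑ u : Finset (Fin n),
        (bΔ.repr R (u ∆ {a}) * ((zK a (u ∆ {a}) : ℤ) : F)) • bΔ u := by
      conv_lhs => rw [hRsum]
      rw [Finset.mul_sum]
      rw [Finset.sum_congr rfl (fun u _ => show
          δ a * (bΔ.repr R u • cliffProd δ u)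
            = (bΔ.repr R u * ((zK a u : ℤ) : F)) • cliffProd δ (u ∆ {a}) by
        rw [mul_smul_comm, hzK a u δ hδ, ← Int.cast_smul_eq_zsmul F, smul_smul])]
      apply Fintype.sum_bijective (fun u => u ∆ {a})
        (Function.Involutive.bijective (fun u => sd_sd u a))
      intro u
      rw [hbΔ, sd_sd]
    have hRt : R * δ a = ∑ u : Finset (Fin n),
        (bΔ.repr R (u ∆ {a}) *
          (((-1 : ℤ) ^ (((u ∆ {a}).erase a).card) * zK a (u ∆ {a}) : ℤ) : F)) • bΔ u := by
      conv_lhs => rw [hRsum]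
      rw [Finset.sum_mul]
      rw [Finset.sum_congr rfl (fun u _ => show
          (bΔ.repr R u • cliffProd δ u) * δ a
            = (bΔ.repr R u *
                (((-1 : ℤ) ^ ((u.erase a).card) * zK a u : ℤ) : F)) • cliffProd δ (u ∆ {a}) by
        have hflip : cliffProd δ u * δ a
            = ((-1 : ℤ) ^ ((u.erase a).card)) • (δ a * cliffProd δ u) :=
          pm_flip (neg_one_pow_pm _) (keyE F p a u δ hδ)
        rw [smul_mul_assoc, hflip, hzK a u δ hδ]
        simp only [← Int.cast_smul_eq_zsmul F, smul_smul]
        rw [Int.cast_mul])]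
      apply Fintype.sum_bijective (fun u => u ∆ {a})
        (Function.Involutive.bijective (fun u => sd_sd u a))
      intro u
      rw [hbΔ, sd_sd]
    have h2 : bΔ.repr R t * ((zK a t : ℤ) : F)
        = bΔ.repr R t * (((-1 : ℤ) ^ ((t.erase a).card) * zK a t : ℤ) : F) := by
      have h := hcomm a
      rw [hL, hRt] at h
      have h2 := congrArg (fun x => bΔ.repr x (t ∆ {a})) h
      simp only [Module.Basis.repr_sum_self] at h2
      rwa [sd_sd] at h2
    rw [Odd.neg_one_pow ha] at h2
    push_cast at h2
    have hz0 : ((zK a t : ℤ) : F) ≠ 0 := by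
      rcases hzK1 a t with h' | h' <;> rw [h'] <;> norm_num
    have h3 : bΔ.repr R t * ((zK a t : ℤ) : F) = 0 := by
      have h4 : (2 : F) * (bΔ.repr R t * ((zK a t : ℤ) : F)) = 0 := by
        linear_combination h2
      exact (mul_eq_zero.mp h4).resolve_left two_ne_zero
    exact (mul_eq_zero.mp h3).resolve_right hz0
  have hfin : R = bΔ.repr R ∅ • bΔ ∅ := by
    conv_lhs => rw [← bΔ.sum_repr R]
    rw [Fintype.sum_eq_single ∅ (fun t ht => by rw [hzero t ht, zero_smul])]
  conv_lhs => rw [hfin, hbΔ, cliffProd_empty]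

lemma coeff_trace {F : Type*} [RCLike F] {n p : ℕ} {A : Type*} [Ring A] [Algebra F A]
    {δ : Fin n → A} (hδ : CRel p δ)
    (b : Module.Basis (Finset (Fin n)) F A) (hb : ∀ s, b s = cliffProd δ s) (X : A) :
    LinearMap.trace F A ((Algebra.lmul F A) X) = (2 ^ n : F) * b.repr X ∅ := by
  classical
  choose zC hzC1 hzC using keyC F p (A := A)
  have hzC0 : ∀ t, zC ∅ t = 1 := by
    intro t
    have h := hzC ∅ t δ hδ
    have he : (∅ : Finset (Fin n)) ∆ t = t := by ext x; simp [Finset.mem_symmDiff]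
    rw [cliffProd_empty, one_mul, he] at h
    exact (int_cancel b hb t (by rw [one_smul]; exact h)).symm
  have htr : ∀ s, LinearMap.trace F A ((Algebra.lmul F A) (b s))
      = if s = ∅ then (2 ^ n : F) else 0 := by
    intro s
    rw [LinearMap.trace_eq_matrix_trace F b, Matrix.trace]
    have hdiag : ∀ t, (LinearMap.toMatrix b b) ((Algebra.lmul F A) (b s)) t t
        = if s = ∅ then ((zC s t : ℤ) : F) else 0 := by
      intro t
      rw [LinearMap.toMatrix_apply]
      rw [show (Algebra.lmul F A) (b s) (b t) = b s * b t from rfl]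
      rw [hb s, hb t, hzC s t δ hδ, ← hb (s ∆ t)]
      simp only [← Int.cast_smul_eq_zsmul F, map_smul, Finsupp.smul_apply, smul_eq_mul,
        Module.Basis.repr_self_apply]
      by_cases hs : s = ∅
      · subst hs
        rw [if_pos (by ext x; simp [Finset.mem_symmDiff]), if_pos rfl, mul_one]
      · rw [if_neg ?_, if_neg hs, mul_zero]
        intro hcon
        apply hs
        have h2 := congrArg (fun x => x ∆ t) hcon
        simpa [symmDiff_symmDiff_cancel_right, symmDiff_self, Finset.bot_eq_empty] using h2
    simp only [Matrix.diag_apply]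
    rw [Finset.sum_congr rfl (fun t _ => hdiag t)]
    by_cases hs : s = ∅
    · subst hs
      simp only [hzC0, Int.cast_one]
      rw [Finset.sum_const, Finset.card_univ, Fintype.card_finset, Fintype.card_fin,
        nsmul_eq_mul]
      norm_num
    · simp [hs]
  conv_lhs => rw [← b.sum_repr X]
  simp only [map_sum, map_smul]
  rw [Finset.sum_congr rfl (fun s _ => by rw [htr s])]
  rw [Fintype.sum_eq_single (∅ : Finset (Fin n))
    (fun t ht => by rw [if_neg ht, smul_zero])]
  rw [if_pos rfl, smul_eq_mul, mul_comm]

lemma trace_genH {F : Type*} [RCLike F] {n p : ℕ} {A : Type*} [Ring A] [Algebra F A]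
    {δ : Fin n → A} (hδ : CRel p δ)
    (b : Module.Basis (Finset (Fin n)) F A) (hb : ∀ s, b s = cliffProd δ s) (W : A) :
    LinearMap.trace F A ((Algebra.lmul F A) (genH F δ δ W))
      = LinearMap.trace F A ((Algebra.lmul F A) W) := by
  classical
  haveI := Module.Free.of_basis b
  haveI := Module.Finite.of_basis b
  choose cC hcC1 hcC using fun s => keyC F p (A := A) s s
  have hsq : ∀ s, cliffProd δ s * cliffProd δ s = cC s • 1 := by
    intro s
    have h := hcC s δ hδ
    rwa [symmDiff_self, Finset.bot_eq_empty, cliffProd_empty] at h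
  have hinv : ∀ s, Ring.inverse (cliffProd δ s) = cC s • cliffProd δ s :=
    fun s => inverse_cliffProd (hcC1 s) (hsq s)
  have hterm : ∀ s, LinearMap.trace F A
      ((Algebra.lmul F A) (cliffProd δ s * W * Ring.inverse (cliffProd δ s)))
      = LinearMap.trace F A ((Algebra.lmul F A) W) := by
    intro s
    rw [show cliffProd δ s * W * Ring.inverse (cliffProd δ s)
        = cliffProd δ s * (W * Ring.inverse (cliffProd δ s)) from mul_assoc _ _ _]
    rw [map_mul, LinearMap.trace_mul_comm, ← map_mul]
    rw [show W * Ring.inverse (cliffProd δ s) * cliffProd δ s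
        = W * (Ring.inverse (cliffProd δ s) * cliffProd δ s) from mul_assoc _ _ _]
    rw [hinv s, smul_mul_assoc, hsq s, pm_smul_smul (hcC1 s), mul_one]
  rw [genH, map_smul, map_smul, map_sum, map_sum]
  rw [Finset.sum_congr rfl (fun s _ => hterm s)]
  rw [Finset.sum_const, Finset.card_univ, Fintype.card_finset, Fintype.card_fin,
    nsmul_eq_mul, smul_eq_mul, ← mul_assoc]
  push_cast
  rw [inv_mul_cancel₀ (pow_ne_zero n (two_ne_zero)), one_mul]

lemma trace_swap {F : Type*} [RCLike F] {n p : ℕ} {A : Type*} [Ring A] [Algebra F A]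
    (bE : Module.Basis (Finset (Fin n)) F A)
    {β γ : Fin n → A} (hβ : CRel p β) (hγ : CRel p γ) (U V : A) :
    LinearMap.trace F A ((Algebra.lmul F A) (V * genH F β γ U))
      = LinearMap.trace F A ((Algebra.lmul F A) (U * genH F γ β V)) := by
  classical
  haveI := Module.Free.of_basis bE
  haveI := Module.Finite.of_basis bE
  choose cC hcC1 hcC using fun s => keyC F p (A := A) s s
  have hsq : ∀ δ : Fin n → A, CRel p δ → ∀ s, cliffProd δ s * cliffProd δ s = cC s • 1 := by
    intro δ hδ s
    have h := hcC s δ hδ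
    rwa [symmDiff_self, Finset.bot_eq_empty, cliffProd_empty] at h
  have hinv : ∀ δ : Fin n → A, CRel p δ → ∀ s,
      Ring.inverse (cliffProd δ s) = cC s • cliffProd δ s :=
    fun δ hδ s => inverse_cliffProd (hcC1 s) (hsq δ hδ s)
  have cyc : ∀ X Y : A, LinearMap.trace F A ((Algebra.lmul F A) (X * Y))
      = LinearMap.trace F A ((Algebra.lmul F A) (Y * X)) := by
    intro X Y; rw [map_mul, LinearMap.trace_mul_comm, ← map_mul]
  rw [genH, genH, mul_smul_comm, mul_smul_comm, map_smul, map_smul, map_smul, map_smul,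
    Finset.mul_sum, Finset.mul_sum, map_sum, map_sum, map_sum, map_sum]
  congr 1
  apply Finset.sum_congr rfl
  intro s _
  rw [hinv β hβ s, hinv γ hγ s]
  rw [show V * (cliffProd β s * U * (cC s • cliffProd γ s))
      = cC s • ((V * cliffProd β s) * (U * cliffProd γ s)) by
        simp only [smul_mul_assoc, mul_smul_comm, smul_smul, mul_assoc]]
  rw [show U * (cliffProd γ s * V * (cC s • cliffProd β s))
      = cC s • ((U * cliffProd γ s) * (V * cliffProd β s)) by
        simp only [smul_mul_assoc, mul_smul_comm, smul_smul, mul_assoc]]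
  rw [map_zsmul, map_zsmul, map_zsmul, map_zsmul, cyc]

end Stmt13

open Stmt13 in
/-- Let `γ^a`, `β^a` satisfy the Clifford relations in `Cl(p,q)` with `n = p + q` even, and
suppose both `{γ^A}` and `{β^A}` are bases. With `H(U) = 2⁻ⁿ ∑_A β^A U (γ^A)⁻¹` and
`P(V) = 2⁻ⁿ ∑_A γ^A V (β^A)⁻¹`, we have `P(V)H(U) = H(U)P(V) = Tr(V·H(U))·e` for all `U, V`,
where `Tr` is the scalar coefficient in the standard basis `{e^A}`. -/
theorem stmt13 {F : Type*} [RCLike F] (p q n : ℕ) (hn : n = p + q) (hne : Even n)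
    {A : Type*} [Ring A] [Algebra F A]
    (e : Fin n → A)
    (hrele : ∀ a b : Fin n, e a * e b + e b * e a = ((2 * eta p a b : ℤ) : A))
    (bE : Module.Basis (Finset (Fin n)) F A)
    (hbE : ∀ s, bE s = cliffProd e s)
    (γ β : Fin n → A)
    (hγ : ∀ a b : Fin n, γ a * γ b + γ b * γ a = ((2 * eta p a b : ℤ) : A))
    (hβ : ∀ a b : Fin n, β a * β b + β b * β a = ((2 * eta p a b : ℤ) : A))
    (bΓ : Module.Basis (Finset (Fin n)) F A) (hbΓ : ∀ s, bΓ s = cliffProd γ s)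
    (bB : Module.Basis (Finset (Fin n)) F A) (hbB : ∀ s, bB s = cliffProd β s)
    (U V : A) :
    genH F γ β V * genH F β γ U = genH F β γ U * genH F γ β V ∧
    genH F γ β V * genH F β γ U = (bE.repr (V * genH F β γ U) ∅) • (1 : A) := by
  classical
  have hrele' : CRel p e := hrele
  have hβ' : CRel p β := hβ
  have hγ' : CRel p γ := hγ
  have hPH : genH F γ β V * genH F β γ U = genH F γ γ (V * genH F β γ U) :=
    genH_mul hrele' bE hbE hβ' hγ' U V
  have hHP : genH F β γ U * genH F γ β V = genH F β β (U * genH F γ β V) :=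
    genH_mul hrele' bE hbE hγ' hβ' V U
  have hRey1 := reynolds_eq hne hγ' bΓ hbΓ (V * genH F β γ U)
  have hRey2 := reynolds_eq hne hβ' bB hbB (U * genH F γ β V)
  have hc1 : bΓ.repr (genH F γ γ (V * genH F β γ U)) ∅ = bE.repr (V * genH F β γ U) ∅ := by
    have t1 := coeff_trace hγ' bΓ hbΓ (genH F γ γ (V * genH F β γ U))
    have t2 := coeff_trace hrele' bE hbE (V * genH F β γ U)
    have t3 := trace_genH hγ' bΓ hbΓ (V * genH F β γ U)
    apply mul_left_cancel₀ (pow_ne_zero n (two_ne_zero (α := F)))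
    rw [← t1, ← t2]
    exact t3
  have hc2 : bB.repr (genH F β β (U * genH F γ β V)) ∅ = bE.repr (U * genH F γ β V) ∅ := by
    have t1 := coeff_trace hβ' bB hbB (genH F β β (U * genH F γ β V))
    have t2 := coeff_trace hrele' bE hbE (U * genH F γ β V)
    have t3 := trace_genH hβ' bB hbB (U * genH F γ β V)
    apply mul_left_cancel₀ (pow_ne_zero n (two_ne_zero (α := F)))
    rw [← t1, ← t2]
    exact t3
  have hswap : bE.repr (U * genH F γ β V) ∅ = bE.repr (V * genH F β γ U) ∅ := by
    have t1 := coeff_trace hrele' bE hbE (U * genH F γ β V)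
    have t2 := coeff_trace hrele' bE hbE (V * genH F β γ U)
    have t3 := trace_swap bE hβ' hγ' U V
    apply mul_left_cancel₀ (pow_ne_zero n (two_ne_zero (α := F)))
    rw [← t1, ← t2]
    exact t3.symm
  constructor
  · rw [hPH, hHP, hRey1, hRey2, hc1, hc2, hswap]
  · rw [hPH, hRey1, hc1]
end

section
/- Let γ^a and β^a (a=1,...,n) each satisfy the Clifford relations in Cl(p,q), n even, with β^{1...n} ≠ −γ^{1...n}. Then there exists a multi-index B with |B| even such that H(γ^B) = (1/2^n) ∑_A β^A γ^B (γ^A)^{-1} ≠ 0. -/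
section helpers
variable {n : ℕ} {A : Type*} [Ring A] {γ : Fin n → A}

theorem zc1 (d : ℤ) (x : A) : x * (d : A) = d • x := by
  rw [(Int.cast_commute d x).symm.eq, ← zsmul_eq_mul]

theorem zc2 (d : ℤ) (x : A) : (d : A) * x = d • x := (zsmul_eq_mul x d).symm

theorem sort_map_prod {n : ℕ} (t : Finset (Fin n)) (f : Fin n → ℤ) :
    ((t.sort (· ≤ ·)).map f).prod = ∏ a ∈ t, f a := by
  calc ((t.sort (· ≤ ·)).map f).prod
      = (Multiset.map f ↑(t.sort (· ≤ ·))).prod := by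
        rw [Multiset.map_coe, Multiset.prod_coe]
    _ = ∏ a ∈ t, f a := by rw [Finset.sort_eq, Finset.prod_eq_multiset_prod]

end helpers


section helpers2

variable {n : ℕ} {A : Type*} [Ring A] {γ : Fin n → A}

theorem cp_move_single
    (hsq : ∀ a, ∃ d : ℤ, (d = 1 ∨ d = -1) ∧ γ a * γ a = (d : A))
    (hanti : ∀ a b : Fin n, a ≠ b → γ a * γ b = -(γ b * γ a)) :
    ∀ (l : List (Fin n)), l.Nodup → ∀ a : Fin n,
      γ a * (l.map γ).prod =
        ((-1 : ℤ)^l.length * (if a ∈ l then -1 else 1)) • ((l.map γ).prod * γ a) := by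
  intro l
  induction l with
  | nil => intro _ a; simp
  | cons b l ih =>
    intro hl a
    have hl' : l.Nodup := hl.of_cons
    have hb : b ∉ l := (List.nodup_cons.mp hl).1
    simp only [List.map_cons, List.prod_cons, List.length_cons, List.mem_cons]
    by_cases hab : a = b
    · subst hab
      obtain ⟨d, hd, hdd⟩ := hsq a
      have iha := ih hl' a
      rw [if_neg hb, mul_one] at iha
      have hsq2 : ((-1 : ℤ)^l.length) * ((-1 : ℤ)^l.length) = 1 := by
        rw [← pow_add]
        exact Even.neg_one_pow ⟨l.length, rfl⟩
      rw [if_pos (Or.inl rfl)]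
      have key : γ a * (l.map γ).prod * γ a = ((-1 : ℤ)^l.length * d) • (l.map γ).prod := by
        rw [iha, smul_mul_assoc, mul_assoc, hdd, zc1, smul_smul]
      rw [← mul_assoc, hdd, zc2, key, smul_smul]
      congr 1
      rw [pow_succ]
      linear_combination (-d) * hsq2
    · have iha := ih hl' a
      have h1 : γ a * (γ b * (l.map γ).prod) = -(γ b * (γ a * (l.map γ).prod)) := by
        rw [← mul_assoc, hanti a b hab, neg_mul, mul_assoc]
      rw [h1, iha, mul_smul_comm, ← neg_smul]
      rw [if_congr (show (a = b ∨ a ∈ l) ↔ a ∈ l by simp [hab]) rfl rfl]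
      rw [mul_assoc]
      congr 1
      ring

theorem cp_move_prod
    (hsq : ∀ a, ∃ d : ℤ, (d = 1 ∨ d = -1) ∧ γ a * γ a = (d : A))
    (hanti : ∀ a b : Fin n, a ≠ b → γ a * γ b = -(γ b * γ a)) :
    ∀ (l m : List (Fin n)), m.Nodup →
      (l.map γ).prod * (m.map γ).prod =
        ((l.map (fun a => (-1 : ℤ)^m.length * (if a ∈ m then -1 else 1))).prod) •
          ((m.map γ).prod * (l.map γ).prod) := by
  intro l
  induction l with
  | nil => intro m _; simp
  | cons a l ih =>
    intro m hm
    simp only [List.map_cons, List.prod_cons]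
    rw [mul_assoc, ih m hm, mul_smul_comm, ← mul_assoc,
      cp_move_single hsq hanti m hm a, smul_mul_assoc, smul_smul, mul_assoc]
    congr 1
    ring

theorem cp_square
    (hsq : ∀ a, ∃ d : ℤ, (d = 1 ∨ d = -1) ∧ γ a * γ a = (d : A))
    (hanti : ∀ a b : Fin n, a ≠ b → γ a * γ b = -(γ b * γ a)) :
    ∀ (l : List (Fin n)), l.Nodup →
      ∃ d : ℤ, (d = 1 ∨ d = -1) ∧ (l.map γ).prod * (l.map γ).prod = (d : A) := by
  intro l
  induction l with
  | nil => exact fun _ => ⟨1, Or.inl rfl, by simp⟩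
  | cons a l ih =>
    intro hl
    have hl' : l.Nodup := hl.of_cons
    have ha : a ∉ l := (List.nodup_cons.mp hl).1
    obtain ⟨d, hd, hdd⟩ := ih hl'
    obtain ⟨e, he, hee⟩ := hsq a
    have hms := cp_move_single hsq hanti l hl' a
    rw [if_neg ha, mul_one] at hms
    have hsq2 : ((-1 : ℤ)^l.length) * ((-1 : ℤ)^l.length) = 1 := by
      rw [← pow_add]
      exact Even.neg_one_pow ⟨l.length, rfl⟩
    have hPs : (l.map γ).prod * γ a = ((-1 : ℤ)^l.length) • (γ a * (l.map γ).prod) := by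
      have h2 := congrArg (fun x => ((-1 : ℤ)^l.length) • x) hms
      simp only [smul_smul, hsq2, one_smul] at h2
      exact h2.symm
    refine ⟨(-1)^l.length * e * d, ?_, ?_⟩
    · rcases hd with h | h <;> rcases he with h' | h' <;> subst h <;> subst h' <;>
        rcases neg_one_pow_eq_or ℤ l.length with h'' | h'' <;> rw [h''] <;> norm_num
    · simp only [List.map_cons, List.prod_cons]
      calc γ a * (l.map γ).prod * (γ a * (l.map γ).prod)
          = γ a * ((l.map γ).prod * γ a) * (l.map γ).prod := by
            rw [mul_assoc, mul_assoc, mul_assoc]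
        _ = ((-1 : ℤ)^l.length) • (γ a * γ a * ((l.map γ).prod * (l.map γ).prod)) := by
            rw [hPs, mul_smul_comm, smul_mul_assoc, ← mul_assoc, mul_assoc]
        _ = ((-1 : ℤ)^l.length) • ((e : A) * (d : A)) := by rw [hee, hdd]
        _ = (((-1)^l.length * e * d : ℤ) : A) := by
            rw [← Int.cast_mul, zsmul_eq_mul, ← Int.cast_mul]
            congr 1
            ring

/-- Square and inverse of a cliffProd. -/
theorem cp_inv
    (hsq : ∀ a, ∃ d : ℤ, (d = 1 ∨ d = -1) ∧ γ a * γ a = (d : A))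
    (hanti : ∀ a b : Fin n, a ≠ b → γ a * γ b = -(γ b * γ a))
    (s : Finset (Fin n)) :
    ∃ d : ℤ, (d = 1 ∨ d = -1) ∧ cliffProd γ s * cliffProd γ s = (d : A) ∧
      Ring.inverse (cliffProd γ s) = d • cliffProd γ s ∧ IsUnit (cliffProd γ s) := by
  obtain ⟨d, hd, hdd⟩ := cp_square hsq hanti _ (Finset.sort_nodup s (· ≤ ·))
  have hdd' : cliffProd γ s * cliffProd γ s = (d : A) := hdd
  have hd2 : ((d * d : ℤ) : A) = 1 := by rcases hd with h | h <;> subst h <;> norm_num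
  have h1 : (d • cliffProd γ s) * cliffProd γ s = 1 := by
    rw [smul_mul_assoc, hdd', ← zc2, ← Int.cast_mul, hd2]
  have h2 : cliffProd γ s * (d • cliffProd γ s) = 1 := by
    rw [mul_smul_comm, hdd', ← zc2, ← Int.cast_mul, hd2]
  have hu : IsUnit (cliffProd γ s) := ⟨⟨cliffProd γ s, d • cliffProd γ s, h2, h1⟩, rfl⟩
  refine ⟨d, hd, hdd', ?_, hu⟩
  calc Ring.inverse (cliffProd γ s)
      = ((d • cliffProd γ s) * cliffProd γ s) * Ring.inverse (cliffProd γ s) := by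
        rw [h1, one_mul]
    _ = (d • cliffProd γ s) * (cliffProd γ s * Ring.inverse (cliffProd γ s)) := by
        rw [mul_assoc]
    _ = d • cliffProd γ s := by rw [Ring.mul_inverse_cancel _ hu, mul_one]

/-- Conjugation identity: for even `t`, `γ^t (γ^s)⁻¹ (γ^t)⁻¹ = w(s,t) • (γ^s)⁻¹`. -/
theorem cp_conj
    (hsq : ∀ a, ∃ d : ℤ, (d = 1 ∨ d = -1) ∧ γ a * γ a = (d : A))
    (hanti : ∀ a b : Fin n, a ≠ b → γ a * γ b = -(γ b * γ a))
    (s t : Finset (Fin n)) (ht : Even t.card) :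
    cliffProd γ t * Ring.inverse (cliffProd γ s) * Ring.inverse (cliffProd γ t)
      = (∏ a ∈ t, (if a ∈ s then (-1 : ℤ) else 1)) • Ring.inverse (cliffProd γ s) := by
  obtain ⟨ds, hds, hdds, hinvs, hus⟩ := cp_inv hsq hanti s
  obtain ⟨dt, hdt, hddt, hinvt, hut⟩ := cp_inv hsq hanti t
  have hdt2 : dt * dt = 1 := by rcases hdt with h | h <;> subst h <;> norm_num
  -- the moving sign
  have hmove := cp_move_prod hsq hanti (t.sort (· ≤ ·)) (s.sort (· ≤ ·))
    (Finset.sort_nodup s (· ≤ ·))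
  have hσ : ((t.sort (· ≤ ·)).map
      (fun a => (-1 : ℤ)^(s.sort (· ≤ ·)).length *
        (if a ∈ s.sort (· ≤ ·) then -1 else 1))).prod
      = ∏ a ∈ t, (if a ∈ s then (-1 : ℤ) else 1) := by
    rw [sort_map_prod t]
    rw [Finset.prod_mul_distrib, Finset.prod_const, Finset.length_sort, ← pow_mul]
    rw [Even.neg_one_pow (ht.mul_left s.card), one_mul]
    refine Finset.prod_congr rfl fun a _ => ?_
    rw [if_congr (Finset.mem_sort (· ≤ ·)) rfl rfl]
  set w : ℤ := ∏ a ∈ t, (if a ∈ s then (-1 : ℤ) else 1) with hw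
  have hmove' : cliffProd γ t * cliffProd γ s = w • (cliffProd γ s * cliffProd γ t) := by
    rw [show cliffProd γ t * cliffProd γ s =
      ((t.sort (· ≤ ·)).map γ).prod * ((s.sort (· ≤ ·)).map γ).prod from rfl, hmove, hσ]
    rfl
  rw [hinvs, hinvt]
  calc cliffProd γ t * (ds • cliffProd γ s) * (dt • cliffProd γ t)
      = (ds * dt) • (cliffProd γ t * cliffProd γ s * cliffProd γ t) := by
        simp only [smul_mul_assoc, mul_smul_comm, smul_smul]
        congr 1
        ring
    _ = (ds * dt) • (w • (cliffProd γ s * (cliffProd γ t * cliffProd γ t))) := by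
        rw [hmove', smul_mul_assoc, mul_assoc]
    _ = (ds * dt * (w * dt)) • cliffProd γ s := by
        rw [hddt, zc1, smul_smul, smul_smul]
        congr 1
        ring
    _ = w • (ds • cliffProd γ s) := by
        rw [smul_smul]
        congr 1
        linear_combination (w * ds) * hdt2

end helpers2

/-- The sign sum: `∑_{|t| even} ∏_{a ∈ t} (-1)^{[a ∈ s]}`. -/
theorem wsum {n : ℕ} (hn : 0 < n) (s : Finset (Fin n)) :
    ∑ t ∈ Finset.univ.filter (fun t : Finset (Fin n) => Even t.card),
      (∏ a ∈ t, (if a ∈ s then (-1 : ℤ) else 1))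
    = if s = ∅ ∨ s = Finset.univ then 2^(n-1) else 0 := by
  haveI : Nonempty (Fin n) := ⟨⟨0, hn⟩⟩
  set g : Fin n → ℤ := fun a => if a ∈ s then (-1 : ℤ) else 1 with hg
  set h : Fin n → ℤ := fun a => if a ∈ s then (1 : ℤ) else -1 with hh
  have hf1 : ∑ t : Finset (Fin n), ∏ a ∈ t, g a = ∏ a : Fin n, (g a + 1) := by
    rw [Finset.prod_add]
    rw [← Finset.powerset_univ]
    refine (Finset.sum_congr rfl fun t _ => ?_).symm
    simp
  have hf2 : ∑ t : Finset (Fin n), ((-1 : ℤ)^t.card * ∏ a ∈ t, g a)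
      = ∏ a : Fin n, (h a + 1) := by
    rw [Finset.prod_add, ← Finset.powerset_univ]
    refine (Finset.sum_congr rfl fun t _ => ?_).symm
    simp only [Finset.prod_const_one, mul_one]
    rw [← Finset.prod_const, ← Finset.prod_mul_distrib]
    refine Finset.prod_congr rfl fun a _ => ?_
    simp only [hg, hh]
    split_ifs <;> norm_num
  have hdouble : (2 : ℤ) * (∑ t ∈ Finset.univ.filter (fun t : Finset (Fin n) => Even t.card),
      ∏ a ∈ t, g a) = ∏ a : Fin n, (g a + 1) + ∏ a : Fin n, (h a + 1) := by
    rw [← hf1, ← hf2, Finset.mul_sum, Finset.sum_filter, ← Finset.sum_add_distrib]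
    refine Finset.sum_congr rfl fun t _ => ?_
    by_cases hev : Even t.card
    · rw [if_pos hev, hev.neg_one_pow]
      ring
    · rw [if_neg hev, (Nat.not_even_iff_odd.mp hev).neg_one_pow]
      ring
  have hP1 : ∏ a : Fin n, (g a + 1) = if s = ∅ then 2^n else 0 := by
    by_cases hs : s = ∅
    · rw [if_pos hs]
      subst hs
      simp [hg, Finset.card_univ]
    · rw [if_neg hs]
      obtain ⟨a, ha⟩ := Finset.nonempty_iff_ne_empty.mpr hs
      exact Finset.prod_eq_zero (Finset.mem_univ a) (by simp [hg, ha])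
  have hP2 : ∏ a : Fin n, (h a + 1) = if s = Finset.univ then 2^n else 0 := by
    by_cases hs : s = Finset.univ
    · rw [if_pos hs]
      subst hs
      simp [hh, Finset.card_univ]
    · rw [if_neg hs]
      have : ∃ a, a ∉ s := by
        by_contra hc
        push_neg at hc
        exact hs (Finset.eq_univ_of_forall hc)
      obtain ⟨a, ha⟩ := this
      exact Finset.prod_eq_zero (Finset.mem_univ a) (by simp [hh, ha])
  have hne : (∅ : Finset (Fin n)) ≠ Finset.univ := by
    intro hc
    exact absurd (hc ▸ Finset.mem_univ (Classical.arbitrary (Fin n))) (Finset.notMem_empty _)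
  have h2n : (2 : ℤ)^n = 2 * 2^(n-1) := by
    rw [← pow_succ']
    congr 1
    omega
  rw [hP1, hP2] at hdouble
  by_cases h1 : s = ∅
  · rw [if_pos (Or.inl h1)]
    rw [if_pos h1, if_neg (h1 ▸ hne), add_zero, h2n] at hdouble
    exact mul_left_cancel₀ two_ne_zero hdouble
  · by_cases h2 : s = Finset.univ
    · rw [if_pos (Or.inr h2)]
      rw [if_neg h1, if_pos h2, zero_add, h2n] at hdouble
      exact mul_left_cancel₀ two_ne_zero hdouble
    · rw [if_neg (by tauto)]
      rw [if_neg h1, if_neg h2, add_zero] at hdouble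
      exact mul_left_cancel₀ two_ne_zero (by linarith)

/-- Let `γ^a` and `β^a` each satisfy the Clifford relations in `Cl(p,q)` with `n` even and
`β^{1…n} ≠ −γ^{1…n}`. Then there is a multi-index `B` of even length with
`H(γ^B) = 2⁻ⁿ ∑_A β^A γ^B (γ^A)⁻¹ ≠ 0`. -/
theorem stmt15 {F : Type*} [RCLike F] (p q n : ℕ) (hn : n = p + q) (hne : Even n)
    {A : Type*} [Ring A] [Algebra F A]
    (e : Fin n → A)
    (hrele : ∀ a b : Fin n, e a * e b + e b * e a = ((2 * eta p a b : ℤ) : A))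
    (bE : Module.Basis (Finset (Fin n)) F A)
    (hbE : ∀ s, bE s = cliffProd e s)
    (γ β : Fin n → A)
    (hγ : ∀ a b : Fin n, γ a * γ b + γ b * γ a = ((2 * eta p a b : ℤ) : A))
    (hβ : ∀ a b : Fin n, β a * β b + β b * β a = ((2 * eta p a b : ℤ) : A))
    (hvol : cliffProd β Finset.univ ≠ -cliffProd γ Finset.univ) :
    ∃ t : Finset (Fin n), Even t.card ∧ genH F β γ (cliffProd γ t) ≠ 0 := by
  classical
  have hnt : Nontrivial A := by
    rcases subsingleton_or_nontrivial A with h | h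
    · exact absurd (Subsingleton.elim _ _) hvol
    · exact h
  have two_ne : (2 : F) ≠ 0 := two_ne_zero
  -- the Clifford relations for γ in convenient form
  have hsqγ : ∀ a, ∃ d : ℤ, (d = 1 ∨ d = -1) ∧ γ a * γ a = (d : A) := by
    intro a
    refine ⟨eta p a a, ?_, ?_⟩
    · simp only [eta, if_pos rfl]
      split_ifs <;> simp
    · have h := hγ a a
      have h2 : (2 : F) • (γ a * γ a) = (2 : F) • ((eta p a a : ℤ) : A) := by
        calc (2 : F) • (γ a * γ a) = (2 : A) * (γ a * γ a) := by
              rw [Algebra.smul_def, map_ofNat]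
          _ = γ a * γ a + γ a * γ a := two_mul _
          _ = ((2 * eta p a a : ℤ) : A) := h
          _ = (2 : A) * ((eta p a a : ℤ) : A) := by push_cast; ring
          _ = (2 : F) • ((eta p a a : ℤ) : A) := by rw [Algebra.smul_def, map_ofNat]
      have h3 := congrArg (fun x => (2 : F)⁻¹ • x) h2
      simpa [smul_smul, inv_mul_cancel₀ two_ne] using h3
  have hantiγ : ∀ a b : Fin n, a ≠ b → γ a * γ b = -(γ b * γ a) := by
    intro a b hab
    have h := hγ a b
    rw [show eta p a b = 0 by simp [eta, hab]] at h
    push_cast at h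
    exact eq_neg_of_add_eq_zero_left h
  rcases Nat.eq_zero_or_pos n with h0 | hpos
  · -- degenerate case n = 0
    subst h0
    refine ⟨∅, by simp, ?_⟩
    haveI : Subsingleton (Finset (Fin 0)) :=
      ⟨fun a b => (Finset.eq_empty_of_isEmpty a).trans (Finset.eq_empty_of_isEmpty b).symm⟩
    have h1 : ∀ (f : Fin 0 → A), cliffProd f (∅ : Finset (Fin 0)) = 1 := by
      intro f; simp [cliffProd]
    rw [genH, h1, Fintype.sum_subsingleton _ (∅ : Finset (Fin 0)), h1, h1,
      Ring.inverse_one]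
    simp
  · -- main case n ≥ 1
    by_contra hcon
    push_neg at hcon
    set E := Finset.univ.filter (fun t : Finset (Fin n) => Even t.card) with hE
    have hzero : ∑ t ∈ E, genH F β γ (cliffProd γ t) * Ring.inverse (cliffProd γ t) = 0 :=
      Finset.sum_eq_zero fun t htE => by
        rw [hcon t ((Finset.mem_filter.mp htE).2), zero_mul]
    have hterm : ∀ t ∈ E, genH F β γ (cliffProd γ t) * Ring.inverse (cliffProd γ t)
        = ((2 : F)^n)⁻¹ • ∑ s : Finset (Fin n),
            (∏ a ∈ t, (if a ∈ s then (-1 : ℤ) else 1)) •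
              (cliffProd β s * Ring.inverse (cliffProd γ s)) := by
      intro t htE
      have ht : Even t.card := (Finset.mem_filter.mp htE).2
      rw [genH, smul_mul_assoc, Finset.sum_mul]
      congr 1
      refine Finset.sum_congr rfl fun s _ => ?_
      calc (cliffProd β s * cliffProd γ t * Ring.inverse (cliffProd γ s)) *
            Ring.inverse (cliffProd γ t)
          = cliffProd β s * (cliffProd γ t * Ring.inverse (cliffProd γ s) *
              Ring.inverse (cliffProd γ t)) := by
            simp only [mul_assoc]
        _ = cliffProd β s * ((∏ a ∈ t, (if a ∈ s then (-1 : ℤ) else 1)) •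
              Ring.inverse (cliffProd γ s)) := by
            rw [cp_conj hsqγ hantiγ s t ht]
        _ = (∏ a ∈ t, (if a ∈ s then (-1 : ℤ) else 1)) •
              (cliffProd β s * Ring.inverse (cliffProd γ s)) := mul_smul_comm _ _ _
    have hsum0 : ∑ t ∈ E, genH F β γ (cliffProd γ t) * Ring.inverse (cliffProd γ t)
        = ((2 : F)^n)⁻¹ • ∑ s : Finset (Fin n),
            (∑ t ∈ E, ∏ a ∈ t, (if a ∈ s then (-1 : ℤ) else 1)) •
              (cliffProd β s * Ring.inverse (cliffProd γ s)) := by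
      rw [Finset.sum_congr rfl hterm, ← Finset.smul_sum, Finset.sum_comm]
      congr 1
      refine Finset.sum_congr rfl fun s _ => (Finset.sum_smul).symm
    have hne0 : (∅ : Finset (Fin n)) ≠ Finset.univ := by
      intro hc
      exact absurd (hc ▸ Finset.mem_univ (⟨0, hpos⟩ : Fin n)) (Finset.notMem_empty _)
    -- evaluate the sign sums via wsum
    have hinner : ∑ s : Finset (Fin n),
          (∑ t ∈ E, ∏ a ∈ t, (if a ∈ s then (-1 : ℤ) else 1)) •
            (cliffProd β s * Ring.inverse (cliffProd γ s))
        = ((2 : ℤ)^(n-1)) • (cliffProd β ∅ * Ring.inverse (cliffProd γ ∅)) +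
          ((2 : ℤ)^(n-1)) •
            (cliffProd β Finset.univ * Ring.inverse (cliffProd γ Finset.univ)) := by
      have step1 : ∀ s : Finset (Fin n),
          (∑ t ∈ E, ∏ a ∈ t, (if a ∈ s then (-1 : ℤ) else 1)) •
            (cliffProd β s * Ring.inverse (cliffProd γ s))
          = (if s = ∅ then ((2 : ℤ)^(n-1)) •
                (cliffProd β s * Ring.inverse (cliffProd γ s)) else 0) +
            (if s = Finset.univ then ((2 : ℤ)^(n-1)) •
                (cliffProd β s * Ring.inverse (cliffProd γ s)) else 0) := by
        intro s
        rw [hE, wsum hpos s]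
        by_cases h1 : s = ∅
        · rw [if_pos (Or.inl h1), if_pos h1, if_neg (h1 ▸ hne0), add_zero]
        · by_cases h2 : s = Finset.univ
          · rw [if_pos (Or.inr h2), if_neg h1, if_pos h2, zero_add]
          · rw [if_neg (by tauto), if_neg h1, if_neg h2, add_zero, zero_smul]
      rw [Finset.sum_congr rfl fun s _ => step1 s, Finset.sum_add_distrib,
        Finset.sum_ite_eq' Finset.univ (∅ : Finset (Fin n)),
        Finset.sum_ite_eq' Finset.univ (Finset.univ : Finset (Fin n))]
      simp
    have hPempty : cliffProd β (∅ : Finset (Fin n)) * Ring.inverse (cliffProd γ ∅) = 1 := by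
      have h1 : ∀ (f : Fin n → A), cliffProd f (∅ : Finset (Fin n)) = 1 := by
        intro f; simp [cliffProd]
      rw [h1, h1, Ring.inverse_one, mul_one]
    -- conclude that 1 + β^univ (γ^univ)⁻¹ = 0
    have hkey : (1 : A) +
        cliffProd β Finset.univ * Ring.inverse (cliffProd γ Finset.univ) = 0 := by
      have h4 : (0 : A) = (((2 : F)^n)⁻¹ * (2 : F)^(n-1)) •
          ((1 : A) + cliffProd β Finset.univ * Ring.inverse (cliffProd γ Finset.univ)) := by
        rw [← hzero, hsum0, hinner, hPempty, ← smul_add, mul_smul]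
        congr 1
        rw [show ((2 : ℤ)^(n-1)) • ((1 : A) + cliffProd β Finset.univ *
            Ring.inverse (cliffProd γ Finset.univ)) = (((2 : ℤ)^(n-1) : ℤ) : F) •
            ((1 : A) + cliffProd β Finset.univ * Ring.inverse (cliffProd γ Finset.univ))
          from (Int.cast_smul_eq_zsmul F _ _).symm]
        push_cast
        rfl
      have hc : (((2 : F)^n)⁻¹ * (2 : F)^(n-1)) ≠ 0 :=
        mul_ne_zero (inv_ne_zero (pow_ne_zero _ two_ne)) (pow_ne_zero _ two_ne)
      rcases smul_eq_zero.mp h4.symm with h | h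
      · exact absurd h hc
      · exact h
    obtain ⟨d, hd, hdd, hinv, hu⟩ := cp_inv hsqγ hantiγ (Finset.univ : Finset (Fin n))
    have h5 := congrArg (fun x => x * cliffProd γ Finset.univ) hkey
    simp only [add_mul, one_mul, zero_mul, mul_assoc,
      Ring.inverse_mul_cancel _ hu, mul_one] at h5
    exact hvol (eq_neg_of_add_eq_zero_right h5)
end
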